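/- arXiv:1605.00568 — 4 statements merged into one kernel-verified Lean document; each statement's English description precedes it below -/
import Mathlib

section
/- Let Ω ⊂ ℝ^d be a bounded open set, let s ∈ S be a measure-preserving map, let φ : Ω → ℝ be a convex differentiable function, and set m = ∇φ ∘ s ∈ L²(Ω, ℝ^d). Then for every vector field w ∈ L²(Ω, ℝ^d) which is divergence-free with vanishing normal trace (that is, ∫_Ω ⟨w(x), ∇q(x)⟩ dx = 0 for every continuously differentiable q : Ω → ℝ with bounded gradient), one has ∫_Ω ⟨m(x) − s(x), w(s(x))⟩ dx = 0; in other words m − s is orthogonal in L² to the set {w ∘ s : w divergence-free with vanishing normal trace}. -/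
open MeasureTheory Set Metric InnerProductSpace Filter
open scoped RealInnerProductSpace Topology

set_option maxHeartbeats 1000000

noncomputable section

variable {E : Type*} [NormedAddCommGroup E] [InnerProductSpace ℝ E] [CompleteSpace E]

lemma inner_gradient_eq_fderiv {φ : E → ℝ} (x v : E) :
    ⟪gradient φ x, v⟫ = fderiv ℝ φ x v := by
  rw [gradient, ← InnerProductSpace.toDual_apply_apply, LinearIsometryEquiv.apply_symm_apply]

lemma subgrad_ineq {φ : E → ℝ} (hφc : ConvexOn ℝ Set.univ φ)
    {x : E} (hd : DifferentiableAt ℝ φ x) (u : E) :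
    ⟪gradient φ x, u - x⟫ ≤ φ u - φ x := by
  set v := u - x with hv
  have hc : ConvexOn ℝ Set.univ (fun t : ℝ => φ (t • v + x)) := by
    have h := hφc.comp_affineMap (AffineMap.lineMap x u : ℝ →ᵃ[ℝ] E)
    have he : (fun t : ℝ => φ (t • v + x)) = φ ∘ (AffineMap.lineMap x u : ℝ →ᵃ[ℝ] E) := by
      funext t
      simp only [Function.comp_apply, AffineMap.lineMap_apply_module, hv]
      congr 1
      rw [smul_sub, sub_smul, one_smul]
      abel
    rw [he]
    simpa using h
  have hc' : HasDerivAt (fun t : ℝ => t • v + x) v 0 := by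
    simpa using ((hasDerivAt_id (0 : ℝ)).smul_const v).add_const x
  have hD : HasDerivAt (fun t : ℝ => φ (t • v + x)) (fderiv ℝ φ x v) 0 := by
    have hx0 : HasFDerivAt φ (fderiv ℝ φ x) ((fun t : ℝ => t • v + x) 0) := by
      simpa using hd.hasFDerivAt
    exact hx0.comp_hasDerivAt 0 hc'
  have hslope := hc.le_slope_of_hasDerivAt (mem_univ (0 : ℝ)) (mem_univ 1) one_pos hD
  rw [inner_gradient_eq_fderiv]
  have h1 : v + x = u := by rw [hv, sub_add_cancel]
  simpa [slope_def_field, h1] using hslope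

lemma grad_cont [FiniteDimensional ℝ E] {φ : E → ℝ} (hφc : ConvexOn ℝ Set.univ φ)
    (hφd : Differentiable ℝ φ) : Continuous fun x => gradient φ x := by
  rw [continuous_iff_continuousAt]
  intro x
  obtain ⟨K, t, ht, hK⟩ := hφc.locallyLipschitz x
  obtain ⟨r, hr, hball⟩ := Metric.mem_nhds_iff.mp ht
  have hbd : ∀ y ∈ ball x r, ‖gradient φ y‖ ≤ K := by
    intro y hy
    have h1 : ‖fderiv ℝ φ y‖ ≤ K :=
      norm_fderiv_le_of_lipschitzOn ℝ (Filter.mem_of_superset (isOpen_ball.mem_nhds hy) hball) hK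
    rw [gradient, LinearIsometryEquiv.norm_map]
    exact h1
  have key : ∀ z : ℕ → E, Tendsto z atTop (𝓝 x) →
      Tendsto (fun n => gradient φ (z n)) atTop (𝓝 (gradient φ x)) := by
    intro z hz
    apply tendsto_of_subseq_tendsto
    intro ns hns
    have hy : Tendsto (fun n => z (ns n)) atTop (𝓝 x) := hz.comp hns
    obtain ⟨N, hN⟩ := Metric.tendsto_atTop.mp hy r hr
    have hmem : ∀ n, gradient φ (z (ns (n + N))) ∈ closedBall (0 : E) K := by
      intro n
      rw [mem_closedBall, dist_zero_right]
      exact hbd _ (mem_ball.mpr (hN (n + N) (Nat.le_add_left N n)))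
    obtain ⟨g, -, ms, hms, hg⟩ := tendsto_subseq_of_bounded isBounded_closedBall hmem
    have hkN : Tendsto (fun k => ms k + N) atTop atTop :=
      tendsto_atTop_mono (fun k => le_trans hms.le_apply (Nat.le_add_right _ _)) tendsto_id
    have hy' : Tendsto (fun k => z (ns (ms k + N))) atTop (𝓝 x) := hy.comp hkN
    have hg' : Tendsto (fun k => gradient φ (z (ns (ms k + N)))) atTop (𝓝 g) := hg
    have hsub : ∀ u : E, ⟪g, u - x⟫ ≤ φ u - φ x := by
      intro u
      have hle : ∀ k, ⟪gradient φ (z (ns (ms k + N))), u - z (ns (ms k + N))⟫ ≤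
          φ u - φ (z (ns (ms k + N))) := fun k => subgrad_ineq hφc (hφd _) u
      have hL : Tendsto (fun k => ⟪gradient φ (z (ns (ms k + N))), u - z (ns (ms k + N))⟫)
          atTop (𝓝 ⟪g, u - x⟫) := hg'.inner (tendsto_const_nhds.sub hy')
      have hR : Tendsto (fun k => φ u - φ (z (ns (ms k + N)))) atTop (𝓝 (φ u - φ x)) :=
        tendsto_const_nhds.sub ((hφd.continuous.tendsto x).comp hy')
      exact le_of_tendsto_of_tendsto' hL hR hle
    have hgeq : g = gradient φ x := by
      set v := g - gradient φ x with hv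
      have hc' : HasDerivAt (fun s : ℝ => s • v + x) v 0 := by
        simpa using ((hasDerivAt_id (0 : ℝ)).smul_const v).add_const x
      have hx0 : HasFDerivAt φ (fderiv ℝ φ x) ((fun s : ℝ => s • v + x) 0) := by
        simpa using (hφd x).hasFDerivAt
      have hD : HasDerivAt (fun s : ℝ => φ (s • v + x)) (fderiv ℝ φ x v) 0 :=
        hx0.comp_hasDerivAt 0 hc'
      rw [hasDerivAt_iff_tendsto_slope] at hD
      have hmono : 𝓝[>] (0 : ℝ) ≤ 𝓝[≠] (0 : ℝ) :=
        nhdsWithin_mono _ fun s hs => ne_of_gt hs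
      have hev : ∀ᶠ s in 𝓝[>] (0 : ℝ), ⟪g, v⟫ ≤ slope (fun s : ℝ => φ (s • v + x)) 0 s := by
        refine eventually_nhdsWithin_of_forall fun s hs => ?_
        have hs0 : (0 : ℝ) < s := hs
        have h2 := hsub (s • v + x)
        rw [add_sub_cancel_right, real_inner_smul_right] at h2
        rw [slope_def_field]
        simp only [zero_smul, zero_add, sub_zero]
        rw [le_div_iff₀ hs0, mul_comm]
        exact h2
      have hle := ge_of_tendsto (hD.mono_left hmono) hev
      rw [← inner_gradient_eq_fderiv] at hle
      have h3 : ⟪g - gradient φ x, v⟫ ≤ 0 := by rw [inner_sub_left]; linarith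
      rw [← hv] at h3
      have h4 := real_inner_self_nonpos.mp h3
      rw [hv, sub_eq_zero] at h4
      exact h4
    exact ⟨fun k => ms k + N, hgeq ▸ hg'⟩
  exact tendsto_iff_seq_tendsto.mpr key

/-- **Orthogonality relation in the polar factorization.**
Let `Ω ⊂ ℝ^d` be a bounded open set, `s` a measure-preserving map of `Ω`, `φ` a convex
differentiable function and `m = ∇φ ∘ s ∈ L²(Ω, ℝ^d)`.  Then for every square-integrable
vector field `w` which is divergence-free with vanishing normal trace in the weak sense
(`∫_Ω ⟨w, ∇q⟩ = 0` for every `C¹` function `q : Ω → ℝ` with bounded gradient), one has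
`∫_Ω ⟨m(x) − s(x), w(s(x))⟩ dx = 0`; i.e. `m − s` is `L²`-orthogonal to `{w ∘ s}`. -/
theorem stmt3 {d : ℕ} (Ω : Set (EuclideanSpace ℝ (Fin d))) (hΩo : IsOpen Ω)
    (hΩb : Bornology.IsBounded Ω)
    (s : EuclideanSpace ℝ (Fin d) → EuclideanSpace ℝ (Fin d))
    (hs : Measure.map s (volume.restrict Ω) = volume.restrict Ω)
    (φ : EuclideanSpace ℝ (Fin d) → ℝ)
    (hφc : ConvexOn ℝ Set.univ φ) (hφd : Differentiable ℝ φ)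
    (hm : MemLp (fun x => gradient φ (s x)) 2 (volume.restrict Ω))
    (w : EuclideanSpace ℝ (Fin d) → EuclideanSpace ℝ (Fin d))
    (hw : MemLp w 2 (volume.restrict Ω))
    (hwdiv : ∀ q : EuclideanSpace ℝ (Fin d) → ℝ, ContDiff ℝ 1 q →
      (∃ C : ℝ, ∀ x, ‖gradient q x‖ ≤ C) →
      ∫ x in Ω, ⟪w x, gradient q x⟫ = 0) :
    ∫ x in Ω, ⟪gradient φ (s x) - s x, w (s x)⟫ = 0 := by
  classical
  by_cases hae : AEMeasurable s (volume.restrict Ω)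
  swap
  · have h0 : (volume.restrict Ω : Measure (EuclideanSpace ℝ (Fin d))) = 0 := by
      rw [← hs, Measure.map_of_not_aemeasurable hae]
    rw [h0, integral_zero_measure]
  · have hgc : Continuous fun y => gradient φ y := grad_cont hφc hφd
    have hfd_cont : Continuous (fderiv ℝ φ) := by
      have he : fderiv ℝ φ = fun y => (toDual ℝ (EuclideanSpace ℝ (Fin d))) (gradient φ y) := by
        funext y; rw [gradient, LinearIsometryEquiv.apply_symm_apply]
      rw [he]; exact (toDual ℝ _).continuous.comp hgc
    have hφ1 : ContDiff ℝ 1 φ := contDiff_one_iff_fderiv.2 ⟨hφd, hfd_cont⟩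
    set ψ : EuclideanSpace ℝ (Fin d) → ℝ := fun y => φ y - ‖y‖ ^ 2 / 2 with hψdef
    have hψ1 : ContDiff ℝ 1 ψ := hφ1.sub ((contDiff_norm_sq ℝ).div_const 2)
    have hngrad : ∀ y : EuclideanSpace ℝ (Fin d),
        HasFDerivAt (fun z : EuclideanSpace ℝ (Fin d) => ‖z‖ ^ 2 / 2) (innerSL ℝ y) y := by
      intro y
      have h : HasFDerivAt (fun z : EuclideanSpace ℝ (Fin d) => ‖z‖ ^ 2 / 2)
          ((2⁻¹ : ℝ) • (2 • innerSL ℝ y)) y := by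
        simpa [div_eq_inv_mul] using
          (hasStrictFDerivAt_norm_sq y).hasFDerivAt.const_mul (2⁻¹ : ℝ)
      convert h using 1
      ext u
      simp only [ContinuousLinearMap.smul_apply, ContinuousLinearMap.add_apply,
        innerSL_apply_apply, two_smul, smul_eq_mul]
      module
    have hψgrad : ∀ y, gradient ψ y = gradient φ y - y := by
      intro y
      have hF : HasFDerivAt ψ (fderiv ℝ φ y - innerSL ℝ y) y :=
        ((hφd y).hasFDerivAt).sub (hngrad y)
      rw [gradient, hF.fderiv, map_sub]
      congr 1
      have hdual : (toDual ℝ (EuclideanSpace ℝ (Fin d))) y = innerSL ℝ y := by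
        ext u
        simp [InnerProductSpace.toDual_apply_apply]
      rw [← hdual, LinearIsometryEquiv.symm_apply_apply]
    obtain ⟨R, hR0, hΩR⟩ := hΩb.subset_ball_lt 0 0
    set bump : ContDiffBump (0 : EuclideanSpace ℝ (Fin d)) := ⟨R, R + 1, hR0, lt_add_one R⟩
      with hbump
    set q : EuclideanSpace ℝ (Fin d) → ℝ := fun y => bump y * ψ y with hqdef
    have hq1 : ContDiff ℝ 1 q := bump.contDiff.mul hψ1
    have hqψ : ∀ y ∈ Ω, gradient q y = gradient φ y - y := by
      intro y hy
      have hev : q =ᶠ[nhds y] ψ := by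
        filter_upwards [isOpen_ball.mem_nhds (hΩR hy)] with z hz
        have h1 : bump z = 1 := bump.one_of_mem_closedBall (ball_subset_closedBall hz)
        simp [hqdef, h1]
      rw [hev.gradient_eq, hψgrad y]
    have hqb : ∃ C : ℝ, ∀ y, ‖gradient q y‖ ≤ C := by
      have hsupp : HasCompactSupport q := bump.hasCompactSupport.mul_right
      have hgq_cont : Continuous fun y => gradient q y := by
        have h := (contDiff_one_iff_fderiv.mp hq1).2
        exact (toDual ℝ (EuclideanSpace ℝ (Fin d))).symm.continuous.comp h
      have hgs : HasCompactSupport fun y => gradient q y :=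
        (hsupp.fderiv ℝ).comp_left (g := (toDual ℝ (EuclideanSpace ℝ (Fin d))).symm) (map_zero _)
      exact hgs.exists_bound_of_continuous hgq_cont
    have key : ∫ y in Ω, ⟪gradient φ y - y, w y⟫ = 0 := by
      rw [← hwdiv q hq1 hqb]
      refine setIntegral_congr_fun hΩo.measurableSet fun y hy => ?_
      rw [hqψ y hy, real_inner_comm]
    have hF : AEStronglyMeasurable (fun y => ⟪gradient φ y - y, w y⟫) (volume.restrict Ω) :=
      AEStronglyMeasurable.inner ((hgc.sub continuous_id).aestronglyMeasurable)
        hw.aestronglyMeasurable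
    have hmap := MeasureTheory.integral_map hae
      (f := fun y => ⟪gradient φ y - y, w y⟫) (by rw [hs]; exact hF)
    rw [hs] at hmap
    rw [← key]
    exact hmap.symm
end
end

section
/- Let Ω ⊂ ℝ^d be a bounded open set with an equal-volume partition (ω_i)_{1≤i≤N}, let ε, τ > 0, and let (M^n, V^n)_{n≥0} in M_N be generated by the symplectic Euler scheme. Define the discrete Hamiltonian H^n = ½‖V^n‖²_M + d_S(M^n)²/(2ε²). Then for every n ≥ 0, (1 − τ²/ε²) H^{n+1} ≤ H^n. -/
open MeasureTheory
open scoped RealInnerProductSpace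

noncomputable section

/-- The set `S ⊆ L²(Ω, ℝ^d)` of measure-preserving maps: those `s` with `s_#Leb = Leb`,
where `Leb` is the restriction of the Lebesgue measure to `Ω`. -/
def MPmaps {d : ℕ} (Ω : Set (EuclideanSpace ℝ (Fin d))) :
    Set (Lp (EuclideanSpace ℝ (Fin d)) 2 (volume.restrict Ω)) :=
  {s | Measure.map s (volume.restrict Ω) = volume.restrict Ω}

/-- The linear subspace `M_N ⊆ L²(Ω, ℝ^d)` of maps that are (a.e.) constant on each cell
`ω_i` of the partition. -/
def PiecewiseConst {d N : ℕ} (Ω : Set (EuclideanSpace ℝ (Fin d)))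
    (ω : Fin N → Set (EuclideanSpace ℝ (Fin d))) :
    Set (Lp (EuclideanSpace ℝ (Fin d)) 2 (volume.restrict Ω)) :=
  {f | ∀ i, ∃ c : EuclideanSpace ℝ (Fin d),
    ∀ᵐ x ∂((volume.restrict Ω).restrict (ω i)), f x = c}


section Aux

variable {d N : ℕ} {Ω : Set (EuclideanSpace ℝ (Fin d))}
  {ω : Fin N → Set (EuclideanSpace ℝ (Fin d))}

lemma pc_add {f g : Lp (EuclideanSpace ℝ (Fin d)) 2 (volume.restrict Ω)}
    (hf : f ∈ PiecewiseConst Ω ω) (hg : g ∈ PiecewiseConst Ω ω) :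
    f + g ∈ PiecewiseConst Ω ω := by
  intro i
  obtain ⟨c, hc⟩ := hf i
  obtain ⟨c', hc'⟩ := hg i
  refine ⟨c + c', ?_⟩
  have h2 : ∀ᵐ x ∂((volume.restrict Ω).restrict (ω i)), (f + g) x = f x + g x :=
    ae_restrict_of_ae (Lp.coeFn_add f g)
  filter_upwards [h2, hc, hc'] with x hx hfx hgx
  rw [hx, hfx, hgx]

lemma pc_sub {f g : Lp (EuclideanSpace ℝ (Fin d)) 2 (volume.restrict Ω)}
    (hf : f ∈ PiecewiseConst Ω ω) (hg : g ∈ PiecewiseConst Ω ω) :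
    f - g ∈ PiecewiseConst Ω ω := by
  intro i
  obtain ⟨c, hc⟩ := hf i
  obtain ⟨c', hc'⟩ := hg i
  refine ⟨c - c', ?_⟩
  have h2 : ∀ᵐ x ∂((volume.restrict Ω).restrict (ω i)), (f - g) x = f x - g x :=
    ae_restrict_of_ae (Lp.coeFn_sub f g)
  filter_upwards [h2, hc, hc'] with x hx hfx hgx
  rw [hx, hfx, hgx]

lemma pc_smul (r : ℝ) {f : Lp (EuclideanSpace ℝ (Fin d)) 2 (volume.restrict Ω)}
    (hf : f ∈ PiecewiseConst Ω ω) :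
    r • f ∈ PiecewiseConst Ω ω := by
  intro i
  obtain ⟨c, hc⟩ := hf i
  refine ⟨r • c, ?_⟩
  have h2 : ∀ᵐ x ∂((volume.restrict Ω).restrict (ω i)), (r • f) x = r • (f x) :=
    ae_restrict_of_ae (Lp.coeFn_smul r f)
  filter_upwards [h2, hc] with x hx hfx
  rw [hx, hfx]

end Aux

set_option maxHeartbeats 1600000 in
/-- **One-step decay of the discrete Hamiltonian for the symplectic Euler scheme.**
Let `Ω ⊂ ℝ^d` be a bounded open set with an equal-volume partition `(ω_i)_{1≤i≤N}`, let
`ε, τ > 0`, and let `(Mₙ, Vₙ)` in `M_N` be generated by the symplectic Euler scheme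
`V_{n+1} = Vₙ − (τ/ε²)(Mₙ − P_{M_N}(sₙ))`, `M_{n+1} = Mₙ + τ V_{n+1}`, where `sₙ` is a
closest point to `Mₙ` in the set `S` of measure-preserving maps and `P_{M_N}` is the
orthogonal projection onto `M_N`.  With `Hₙ = ½‖Vₙ‖² + d_S(Mₙ)²/(2ε²)`, one has
`(1 − τ²/ε²) H_{n+1} ≤ Hₙ` for every `n ≥ 0`. -/
theorem stmt6 {d N : ℕ} (hN : 0 < N)
    (Ω : Set (EuclideanSpace ℝ (Fin d))) (hΩo : IsOpen Ω) (hΩb : Bornology.IsBounded Ω)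
    (ω : Fin N → Set (EuclideanSpace ℝ (Fin d)))
    (hωmeas : ∀ i, MeasurableSet (ω i))
    (hωsub : ∀ i, ω i ⊆ Ω)
    (hωdisj : Pairwise fun i j => volume (ω i ∩ ω j) = 0)
    (hωcover : volume (Ω \ ⋃ i, ω i) = 0)
    (hωvol : ∀ i, volume (ω i) = volume Ω / N)
    (ε τ : ℝ) (hε : 0 < ε) (hτ : 0 < τ)
    (M V s : ℕ → Lp (EuclideanSpace ℝ (Fin d)) 2 (volume.restrict Ω))
    (PN : Lp (EuclideanSpace ℝ (Fin d)) 2 (volume.restrict Ω) →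
          Lp (EuclideanSpace ℝ (Fin d)) 2 (volume.restrict Ω))
    (hPNmem : ∀ f, PN f ∈ PiecewiseConst Ω ω)
    (hPNorth : ∀ f, ∀ g ∈ PiecewiseConst Ω ω, ⟪f - PN f, g⟫ = 0)
    (hM0 : M 0 ∈ PiecewiseConst Ω ω) (hV0 : V 0 ∈ PiecewiseConst Ω ω)
    (hsS : ∀ n, s n ∈ MPmaps Ω)
    (hsproj : ∀ n, ‖M n - s n‖ = Metric.infDist (M n) (MPmaps Ω))
    (hVrec : ∀ n, V (n + 1) = V n - (τ / ε ^ 2) • (M n - PN (s n)))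
    (hMrec : ∀ n, M (n + 1) = M n + τ • V (n + 1)) :
    ∀ n : ℕ,
      (1 - τ ^ 2 / ε ^ 2) *
          ((1 / 2) * ‖V (n + 1)‖ ^ 2
            + Metric.infDist (M (n + 1)) (MPmaps Ω) ^ 2 / (2 * ε ^ 2))
        ≤ (1 / 2) * ‖V n‖ ^ 2
            + Metric.infDist (M n) (MPmaps Ω) ^ 2 / (2 * ε ^ 2) := by
  intro n
  have he : (0:ℝ) < ε ^ 2 := by positivity
  have hene : (ε:ℝ) ^ 2 ≠ 0 := ne_of_gt he
  -- membership of the iterates in the piecewise-constant subspace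
  have hmem : ∀ m, M m ∈ PiecewiseConst Ω ω ∧ V m ∈ PiecewiseConst Ω ω := by
    intro m
    induction m with
    | zero => exact ⟨hM0, hV0⟩
    | succ k ih =>
      have hV' : V (k + 1) ∈ PiecewiseConst Ω ω := by
        rw [hVrec]
        exact pc_sub ih.2 (pc_smul _ (pc_sub ih.1 (hPNmem _)))
      refine ⟨?_, hV'⟩
      rw [hMrec]
      exact pc_add ih.1 (pc_smul _ hV')
  set c : ℝ := τ / ε ^ 2 with hc
  set g : Lp (EuclideanSpace ℝ (Fin d)) 2 (volume.restrict Ω) := M n - PN (s n) with hg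
  have hce : c * ε ^ 2 = τ := by
    rw [hc]; field_simp
  -- expansion of ‖V (n+1)‖²
  have hA : ‖V (n + 1)‖ ^ 2
      = ‖V n‖ ^ 2 - 2 * (c * ⟪V n, g⟫) + c ^ 2 * ‖g‖ ^ 2 := by
    rw [hVrec, ← hg, norm_sub_sq_real, real_inner_smul_right, norm_smul]
    rw [mul_pow, Real.norm_eq_abs, sq_abs]
  -- inner product of V (n+1) with g
  have hI : ⟪V (n + 1), g⟫ = ⟪V n, g⟫ - c * ‖g‖ ^ 2 := by
    rw [hVrec, ← hg, inner_sub_left, real_inner_smul_left,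
      real_inner_self_eq_norm_sq]
  -- orthogonality
  have horth : ⟪s n - PN (s n), V (n + 1)⟫ = 0 := hPNorth (s n) _ (hmem (n + 1)).2
  have hDin : ⟪M n - s n, V (n + 1)⟫ = ⟪V n, g⟫ - c * ‖g‖ ^ 2 := by
    have hrw : M n - s n = g - (s n - PN (s n)) := by rw [hg]; abel
    rw [hrw, inner_sub_left, horth, sub_zero, real_inner_comm, hI]
  -- distance bound
  have hdist : Metric.infDist (M (n + 1)) (MPmaps Ω) ≤ ‖M (n + 1) - s n‖ := by
    rw [← dist_eq_norm]; exact Metric.infDist_le_dist_of_mem (hsS n)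
  have hCsq : Metric.infDist (M (n + 1)) (MPmaps Ω) ^ 2 ≤ ‖M (n + 1) - s n‖ ^ 2 :=
    pow_le_pow_left₀ Metric.infDist_nonneg hdist 2
  have hexp : ‖M (n + 1) - s n‖ ^ 2
      = ‖M n - s n‖ ^ 2 + 2 * (τ * ⟪M n - s n, V (n + 1)⟫) + τ ^ 2 * ‖V (n + 1)‖ ^ 2 := by
    have hrw : M (n + 1) - s n = (M n - s n) + τ • V (n + 1) := by rw [hMrec]; abel
    rw [hrw, norm_add_sq_real, real_inner_smul_right, norm_smul, mul_pow, Real.norm_eq_abs, sq_abs]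
  -- abbreviations
  set a : ℝ := ‖V n‖ ^ 2 with ha
  set b : ℝ := ‖V (n + 1)‖ ^ 2 with hb
  set G : ℝ := ‖g‖ ^ 2 with hG
  set J : ℝ := ⟪V n, g⟫ with hJ
  set D0 : ℝ := Metric.infDist (M n) (MPmaps Ω) with hD0
  set D1 : ℝ := Metric.infDist (M (n + 1)) (MPmaps Ω) with hD1
  have hC' : D1 ^ 2 ≤ D0 ^ 2 + 2 * (τ * (J - c * G)) + τ ^ 2 * b := by
    have := hCsq.trans_eq hexp
    rwa [hDin, hsproj n, ← hD0] at this
  have hGnn : (0:ℝ) ≤ G := by rw [hG]; positivity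
  have hD1nn : (0:ℝ) ≤ D1 ^ 2 := sq_nonneg _
  have hann : (0:ℝ) ≤ a := by rw [ha]; positivity
  have hbnn : (0:ℝ) ≤ b := by rw [hb]; positivity
  -- the denominator-free inequality
  have goalmul : (ε ^ 2 - τ ^ 2) * (ε ^ 2 * b + D1 ^ 2)
      ≤ ε ^ 2 * (ε ^ 2 * a + D0 ^ 2) := by
    have hA2 : ε ^ 2 * (ε ^ 2 * b) = ε ^ 2 * (ε ^ 2 * a) - 2 * τ * ε ^ 2 * J + τ ^ 2 * G := by
      have : ε ^ 2 * (ε ^ 2 * b) = ε ^ 2 * ε ^ 2 * (a - 2 * (c * J) + c ^ 2 * G) := by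
        rw [← hA]; ring
      rw [this]
      have hc2 : c ^ 2 * (ε ^ 2 * ε ^ 2) = τ ^ 2 := by rw [← hce]; ring
      linear_combination (-2 * J * ε ^ 2) * hce + G * hc2
    have hC2 : ε ^ 2 * D1 ^ 2
        ≤ ε ^ 2 * D0 ^ 2 + 2 * τ * ε ^ 2 * J - 2 * τ ^ 2 * G + τ ^ 2 * (ε ^ 2 * b) := by
      have h1 : ε ^ 2 * D1 ^ 2 ≤ ε ^ 2 * (D0 ^ 2 + 2 * (τ * (J - c * G)) + τ ^ 2 * b) :=
        mul_le_mul_of_nonneg_left hC' (le_of_lt he)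
      have h2 : ε ^ 2 * (D0 ^ 2 + 2 * (τ * (J - c * G)) + τ ^ 2 * b)
          = ε ^ 2 * D0 ^ 2 + 2 * τ * ε ^ 2 * J - 2 * τ * (c * ε ^ 2) * G
            + τ ^ 2 * (ε ^ 2 * b) := by ring
      rw [h2, hce] at h1
      linarith [h1]
    nlinarith [hA2, hC2, mul_nonneg (sq_nonneg τ) hGnn, mul_nonneg (sq_nonneg τ) hD1nn]
  -- convert to the original (divided) form
  have h2e : (0:ℝ) < 2 * ε ^ 2 * ε ^ 2 := by positivity
  have hL : (1 - τ ^ 2 / ε ^ 2) * ((1 / 2) * b + D1 ^ 2 / (2 * ε ^ 2))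
      = ((ε ^ 2 - τ ^ 2) * (ε ^ 2 * b + D1 ^ 2)) / (2 * ε ^ 2 * ε ^ 2) := by
    field_simp
  have hR : (1 / 2) * a + D0 ^ 2 / (2 * ε ^ 2)
      = (ε ^ 2 * (ε ^ 2 * a + D0 ^ 2)) / (2 * ε ^ 2 * ε ^ 2) := by
    field_simp
  rw [hL, hR]
  exact (div_le_div_iff_of_pos_right h2e).mpr goalmul
end
end

section
/- Let Ω ⊂ ℝ^d be a bounded open set with an equal-volume partition (ω_i)_{1≤i≤N} of mesh h_N, let ε, τ, T > 0 with τ² ≤ ε²/2, and let (M^n, V^n)_{n≥0} in M_N be generated by the symplectic Euler scheme with d_S(M⁰) ≤ h_N. Define H^n = ½‖V^n‖²_M + d_S(M^n)²/(2ε²). Then for every integer n with 0 ≤ nτ ≤ T, H^n ≤ e^{2Tτ/ε²} (½‖V⁰‖²_M + h_N²/(2ε²)). -/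
open MeasureTheory
open scoped RealInnerProductSpace

noncomputable section

set_option maxHeartbeats 2000000 in
/-- **Uniform bound on the discrete Hamiltonian for the symplectic Euler scheme.**
With the same setting as the one-step decay lemma, if moreover `τ² ≤ ε²/2` and
`d_S(M⁰) ≤ h_N` (where `h_N` is the mesh of the partition), then for every integer `n`
with `0 ≤ nτ ≤ T`, `Hₙ ≤ exp(2Tτ/ε²) (½‖V⁰‖² + h_N²/(2ε²))`. -/
theorem stmt7 {d N : ℕ} (hN : 0 < N)
    (Ω : Set (EuclideanSpace ℝ (Fin d))) (hΩo : IsOpen Ω) (hΩb : Bornology.IsBounded Ω)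
    (ω : Fin N → Set (EuclideanSpace ℝ (Fin d)))
    (hωmeas : ∀ i, MeasurableSet (ω i))
    (hωsub : ∀ i, ω i ⊆ Ω)
    (hωdisj : Pairwise fun i j => volume (ω i ∩ ω j) = 0)
    (hωcover : volume (Ω \ ⋃ i, ω i) = 0)
    (hωvol : ∀ i, volume (ω i) = volume Ω / N)
    (ε τ h T : ℝ) (hε : 0 < ε) (hτ : 0 < τ) (hT : 0 < T) (hτε : τ ^ 2 ≤ ε ^ 2 / 2)
    (hh : 0 ≤ h) (hωdiam : ∀ i, Metric.diam (ω i) ≤ h)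
    (M V s : ℕ → Lp (EuclideanSpace ℝ (Fin d)) 2 (volume.restrict Ω))
    (PN : Lp (EuclideanSpace ℝ (Fin d)) 2 (volume.restrict Ω) →
          Lp (EuclideanSpace ℝ (Fin d)) 2 (volume.restrict Ω))
    (hPNmem : ∀ f, PN f ∈ PiecewiseConst Ω ω)
    (hPNorth : ∀ f, ∀ g ∈ PiecewiseConst Ω ω, ⟪f - PN f, g⟫ = 0)
    (hM0 : M 0 ∈ PiecewiseConst Ω ω) (hV0 : V 0 ∈ PiecewiseConst Ω ω)
    (hsS : ∀ n, s n ∈ MPmaps Ω)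
    (hsproj : ∀ n, ‖M n - s n‖ = Metric.infDist (M n) (MPmaps Ω))
    (hd0 : Metric.infDist (M 0) (MPmaps Ω) ≤ h)
    (hVrec : ∀ n, V (n + 1) = V n - (τ / ε ^ 2) • (M n - PN (s n)))
    (hMrec : ∀ n, M (n + 1) = M n + τ • V (n + 1)) :
    ∀ n : ℕ, (n : ℝ) * τ ≤ T →
      (1 / 2) * ‖V n‖ ^ 2 + Metric.infDist (M n) (MPmaps Ω) ^ 2 / (2 * ε ^ 2)
        ≤ Real.exp (2 * T * τ / ε ^ 2) * ((1 / 2) * ‖V 0‖ ^ 2 + h ^ 2 / (2 * ε ^ 2)) := by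
  classical
  set PC := PiecewiseConst Ω ω with hPC
  set Sset := MPmaps Ω with hSset
  have hε2 : (0:ℝ) < ε ^ 2 := by positivity
  have hPCsub : ∀ f g : Lp (EuclideanSpace ℝ (Fin d)) 2 (volume.restrict Ω),
      f ∈ PC → g ∈ PC → f - g ∈ PC := by
    intro f g hf hg i
    obtain ⟨a, ha⟩ := hf i
    obtain ⟨b, hb⟩ := hg i
    refine ⟨a - b, ?_⟩
    have hfg := ae_restrict_of_ae (s := ω i) (Lp.coeFn_sub f g)
    filter_upwards [ha, hb, hfg] with x hx1 hx2 hx3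
    rw [hx3]; simp [hx1, hx2]
  have hPCadd : ∀ f g : Lp (EuclideanSpace ℝ (Fin d)) 2 (volume.restrict Ω),
      f ∈ PC → g ∈ PC → f + g ∈ PC := by
    intro f g hf hg i
    obtain ⟨a, ha⟩ := hf i
    obtain ⟨b, hb⟩ := hg i
    refine ⟨a + b, ?_⟩
    have hfg := ae_restrict_of_ae (s := ω i) (Lp.coeFn_add f g)
    filter_upwards [ha, hb, hfg] with x hx1 hx2 hx3
    rw [hx3]; simp [hx1, hx2]
  have hPCsmul : ∀ (r : ℝ) (f : Lp (EuclideanSpace ℝ (Fin d)) 2 (volume.restrict Ω)),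
      f ∈ PC → r • f ∈ PC := by
    intro r f hf i
    obtain ⟨a, ha⟩ := hf i
    refine ⟨r • a, ?_⟩
    have hfg := ae_restrict_of_ae (s := ω i) (Lp.coeFn_smul r f)
    filter_upwards [ha, hfg] with x hx1 hx3
    rw [hx3]; simp [hx1]
  have hmem : ∀ n, M n ∈ PC ∧ V n ∈ PC := by
    intro n
    induction n with
    | zero => exact ⟨hM0, hV0⟩
    | succ n ih =>
      have hV1 : V (n + 1) ∈ PC := by
        rw [hVrec]
        exact hPCsub _ _ ih.2 (hPCsmul _ _ (hPCsub _ _ ih.1 (hPNmem _)))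
      exact ⟨by rw [hMrec]; exact hPCadd _ _ ih.1 (hPCsmul _ _ hV1), hV1⟩
  set H : ℕ → ℝ := fun n =>
    (1 / 2) * ‖V n‖ ^ 2 + Metric.infDist (M n) Sset ^ 2 / (2 * ε ^ 2) with hH
  have hHnonneg : ∀ n, 0 ≤ H n := by
    intro n
    have h1 := Metric.infDist_nonneg (x := M n) (s := Sset)
    have h2 : (0:ℝ) ≤ ‖V n‖ := norm_nonneg _
    simp only [hH]
    positivity
  set k : ℝ := τ ^ 2 / ε ^ 2 with hk
  have hk0 : 0 ≤ k := by positivity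
  have hkhalf : k ≤ 1 / 2 := by
    rw [hk, div_le_iff₀ hε2]
    linarith
  have step : ∀ n, H (n + 1) ≤ (1 + 2 * k) * H n := by
    intro n
    set c : ℝ := τ / ε ^ 2 with hc
    have hcpos : 0 < c := by positivity
    set w := M n - PN (s n) with hw
    have hVn1 : V (n + 1) = V n - c • w := hVrec n
    have hA : ‖V (n + 1)‖ ^ 2 = ‖V n‖ ^ 2 - 2 * (c * ⟪w, V n⟫) + c ^ 2 * ‖w‖ ^ 2 := by
      rw [hVn1, @norm_sub_sq_real, real_inner_smul_right, norm_smul,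
        real_inner_comm (V n) w, mul_pow, Real.norm_eq_abs, sq_abs]
    have hd1 : Metric.infDist (M (n + 1)) Sset ≤ ‖M (n + 1) - s n‖ := by
      rw [← dist_eq_norm]
      exact Metric.infDist_le_dist_of_mem (hsS n)
    have hd1sq : Metric.infDist (M (n + 1)) Sset ^ 2 ≤ ‖M (n + 1) - s n‖ ^ 2 :=
      pow_le_pow_left₀ Metric.infDist_nonneg hd1 2
    have horth : ⟪s n - PN (s n), V (n + 1)⟫ = 0 := hPNorth (s n) (V (n + 1)) (hmem (n + 1)).2
    have hi : ⟪M n - s n, V (n + 1)⟫ = ⟪w, V (n + 1)⟫ := by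
      have hms : M n - s n = w - (s n - PN (s n)) := by rw [hw]; abel
      rw [hms, inner_sub_left, horth, sub_zero]
    have hexp : ‖M (n + 1) - s n‖ ^ 2
        = ‖M n - s n‖ ^ 2 + 2 * (τ * ⟪w, V (n + 1)⟫) + τ ^ 2 * ‖V (n + 1)‖ ^ 2 := by
      have hms : M (n + 1) - s n = (M n - s n) + τ • V (n + 1) := by rw [hMrec]; abel
      rw [hms, @norm_add_sq_real, real_inner_smul_right, hi, norm_smul, mul_pow,
        Real.norm_eq_abs, sq_abs]
    have hD : ⟪w, V (n + 1)⟫ = ⟪w, V n⟫ - c * ‖w‖ ^ 2 := by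
      rw [hVn1, inner_sub_right, real_inner_smul_right, real_inner_self_eq_norm_sq]
    have hdn : ‖M n - s n‖ = Metric.infDist (M n) Sset := hsproj n
    have hcε : c * ε ^ 2 = τ := by
      rw [hc]; field_simp
    have hknum : k * ε ^ 2 = τ ^ 2 := by rw [hk]; field_simp
    have hd1sq' : Metric.infDist (M (n + 1)) Sset ^ 2
        ≤ Metric.infDist (M n) Sset ^ 2 + 2 * (τ * (⟪w, V n⟫ - c * ‖w‖ ^ 2))
          + τ ^ 2 * ‖V (n + 1)‖ ^ 2 := by
      rw [← hdn, ← hD, ← hexp]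
      exact hd1sq
    have hAε : ε ^ 2 * ‖V (n + 1)‖ ^ 2
        = ε ^ 2 * ‖V n‖ ^ 2 - 2 * (τ * ⟪w, V n⟫) + (τ * c) * ‖w‖ ^ 2 := by
      linear_combination ε ^ 2 * hA + (c * ‖w‖ ^ 2 - 2 * ⟪w, V n⟫) * hcε
    have hτcW : (0:ℝ) ≤ τ * c * ‖w‖ ^ 2 :=
      mul_nonneg (mul_nonneg hτ.le hcpos.le) (sq_nonneg _)
    have hmul : ε ^ 2 * ‖V (n + 1)‖ ^ 2 + Metric.infDist (M (n + 1)) Sset ^ 2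
        ≤ ε ^ 2 * ‖V n‖ ^ 2 + Metric.infDist (M n) Sset ^ 2
          + k * ε ^ 2 * ‖V (n + 1)‖ ^ 2 := by
      rw [hknum]
      nlinarith [hd1sq', hAε, hτcW]
    have key : H (n + 1) ≤ H n + k * ((1 / 2) * ‖V (n + 1)‖ ^ 2) := by
      simp only [hH]
      rw [← mul_le_mul_iff_right₀ (show (0:ℝ) < 2 * ε ^ 2 by positivity)]
      have e1 : 2 * ε ^ 2 * (Metric.infDist (M (n + 1)) Sset ^ 2 / (2 * ε ^ 2))
          = Metric.infDist (M (n + 1)) Sset ^ 2 := by field_simp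
      have e0 : 2 * ε ^ 2 * (Metric.infDist (M n) Sset ^ 2 / (2 * ε ^ 2))
          = Metric.infDist (M n) Sset ^ 2 := by field_simp
      rw [mul_add, mul_add, mul_add, e1, e0]
      nlinarith [hmul]
    have hhalf : k * ((1 / 2) * ‖V (n + 1)‖ ^ 2) ≤ k * H (n + 1) := by
      apply mul_le_mul_of_nonneg_left _ hk0
      simp only [hH]
      have h3 : (0:ℝ) ≤ Metric.infDist (M (n + 1)) Sset ^ 2 / (2 * ε ^ 2) := by positivity
      linarith
    have h1 : H (n + 1) ≤ H n + k * H (n + 1) := key.trans (add_le_add_right hhalf (H n))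
    have h1k : k * H (n + 1) ≤ k * (H n + k * H (n + 1)) :=
      mul_le_mul_of_nonneg_left h1 hk0
    have h3 : (0:ℝ) ≤ k * (1 - 2 * k) * H (n + 1) :=
      mul_nonneg (mul_nonneg hk0 (by linarith only [hkhalf])) (hHnonneg (n + 1))
    linarith only [h1, h1k, h3]
  have bound : ∀ n, H n ≤ (1 + 2 * k) ^ n * H 0 := by
    intro n
    induction n with
    | zero => simp
    | succ n ih =>
      calc H (n + 1) ≤ (1 + 2 * k) * H n := step n
        _ ≤ (1 + 2 * k) * ((1 + 2 * k) ^ n * H 0) :=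
            mul_le_mul_of_nonneg_left ih (by linarith)
        _ = (1 + 2 * k) ^ (n + 1) * H 0 := by ring
  intro n hnT
  have hexpb : (1 + 2 * k) ^ n ≤ Real.exp (2 * T * τ / ε ^ 2) := by
    calc (1 + 2 * k) ^ n ≤ Real.exp (2 * k) ^ n := by
          apply pow_le_pow_left₀ (by linarith)
          linarith [Real.add_one_le_exp (2 * k)]
      _ = Real.exp ((n : ℝ) * (2 * k)) := by rw [Real.exp_nat_mul]
      _ ≤ Real.exp (2 * T * τ / ε ^ 2) := by
          apply Real.exp_le_exp.2
          have heq : (n : ℝ) * (2 * k) = 2 * ((n : ℝ) * τ) * τ / ε ^ 2 := by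
            rw [hk]; ring
          rw [heq]
          gcongr
  have hH0 : H 0 ≤ (1 / 2) * ‖V 0‖ ^ 2 + h ^ 2 / (2 * ε ^ 2) := by
    simp only [hH]
    have hsq : Metric.infDist (M 0) Sset ^ 2 ≤ h ^ 2 :=
      pow_le_pow_left₀ Metric.infDist_nonneg hd0 2
    have h2 : Metric.infDist (M 0) Sset ^ 2 / (2 * ε ^ 2) ≤ h ^ 2 / (2 * ε ^ 2) := by
      gcongr
    linarith
  calc H n ≤ (1 + 2 * k) ^ n * H 0 := bound n
    _ ≤ Real.exp (2 * T * τ / ε ^ 2) * H 0 :=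
        mul_le_mul_of_nonneg_right hexpb (hHnonneg 0)
    _ ≤ Real.exp (2 * T * τ / ε ^ 2) * ((1 / 2) * ‖V 0‖ ^ 2 + h ^ 2 / (2 * ε ^ 2)) :=
        mul_le_mul_of_nonneg_left hH0 (Real.exp_nonneg _)
end
end

section
/- Let Ω ⊂ ℝ^d be a bounded connected open set with an equal-volume partition (ω_i)_{1≤i≤N}, let m ∈ M_N take the pairwise distinct values M_i on ω_i, and let ψ ∈ ℝ^N satisfy Leb(Lag_i(M, ψ) ∩ Ω) = Leb(Ω)/N for all i; write L_i = Lag_i(M, ψ) ∩ Ω. Then the squared distance from m to the set of measure-preserving maps equals d_S(m)² = Σ_{i=1}^N ∫_{L_i} ‖x − M_i‖² dx. -/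
open MeasureTheory

noncomputable section

/-- The Laguerre cell of index `i` associated to sites `M` and weights `ψ`. -/
def Lag {d N : ℕ} (M : Fin N → EuclideanSpace ℝ (Fin d)) (ψ : Fin N → ℝ) (i : Fin N) :
    Set (EuclideanSpace ℝ (Fin d)) :=
  {x | ∀ j : Fin N, ‖x - M i‖ ^ 2 + ψ i ≤ ‖x - M j‖ ^ 2 + ψ j}


open Set Filter Topology
open scoped RealInnerProductSpace

namespace Stmt11Aux
set_option linter.unusedSectionVars false


variable (μ : Measure ℝ)

/-- CDF of a measure on ℝ. -/
def cdf (t : ℝ) : ℝ := (μ (Set.Iic t)).toReal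

variable [IsFiniteMeasure μ]

lemma cdf_mono : Monotone (cdf μ) := fun _ _ hab =>
  ENNReal.toReal_mono (measure_ne_top μ _) (measure_mono (Iic_subset_Iic.2 hab))

lemma cdf_nonneg (t : ℝ) : 0 ≤ cdf μ t := ENNReal.toReal_nonneg

lemma cdf_le (t : ℝ) : cdf μ t ≤ (μ univ).toReal :=
  ENNReal.toReal_mono (measure_ne_top μ _) (measure_mono (subset_univ _))

lemma measurable_cdf : Measurable (cdf μ) := (cdf_mono μ).measurable

lemma ofReal_cdf (t : ℝ) : ENNReal.ofReal (cdf μ t) = μ (Iic t) :=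
  ENNReal.ofReal_toReal (measure_ne_top μ _)

/-- right continuity along the sequence t + 1/(n+1) -/
lemma tendsto_cdf_right (t : ℝ) :
    Tendsto (fun n : ℕ => cdf μ (t + ((n : ℝ) + 1)⁻¹)) atTop (𝓝 (cdf μ t)) := by
  have h1 : Tendsto (fun n : ℕ => μ (Iic (t + ((n : ℝ) + 1)⁻¹))) atTop (𝓝 (μ (⋂ n : ℕ, Iic (t + ((n : ℝ) + 1)⁻¹)))) := by
    apply tendsto_measure_iInter_atTop
    · exact fun n => (measurableSet_Iic).nullMeasurableSet
    · intro a b hab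
      apply Iic_subset_Iic.2
      have : ((b:ℝ)+1)⁻¹ ≤ ((a:ℝ)+1)⁻¹ := by gcongr <;> exact_mod_cast hab
      linarith
    · exact ⟨0, measure_ne_top μ _⟩
  have h2 : (⋂ n : ℕ, Iic (t + ((n : ℝ) + 1)⁻¹)) = Iic t := by
    ext x
    simp only [mem_iInter, mem_Iic]
    constructor
    · intro h
      by_contra hx
      push_neg at hx
      obtain ⟨n, hn⟩ := exists_nat_one_div_lt (sub_pos.2 hx)
      have := h n
      rw [one_div] at hn
      linarith
    · intro h n
      have : (0:ℝ) < ((n : ℝ) + 1)⁻¹ := by positivity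
      linarith
  rw [h2] at h1
  exact (ENNReal.tendsto_toReal (measure_ne_top μ _)).comp h1

lemma tendsto_cdf_atTop : Tendsto (fun n : ℕ => cdf μ (n : ℝ)) atTop (𝓝 (μ univ).toReal) := by
  have h1 : Tendsto (fun n : ℕ => μ (Iic (n : ℝ))) atTop (𝓝 (μ (⋃ n : ℕ, Iic (n : ℝ)))) := by
    apply tendsto_measure_iUnion_atTop
    intro a b hab
    exact Iic_subset_Iic.2 (by exact_mod_cast hab)
  have h2 : (⋃ n : ℕ, Iic ((n : ℝ))) = univ := by
    ext x
    simp only [mem_iUnion, mem_Iic, mem_univ, iff_true]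
    obtain ⟨n, hn⟩ := exists_nat_ge x
    exact ⟨n, hn⟩
  rw [h2] at h1
  exact (ENNReal.tendsto_toReal (measure_ne_top μ _)).comp h1

lemma tendsto_cdf_atBot : Tendsto (fun n : ℕ => cdf μ (-(n : ℝ))) atTop (𝓝 0) := by
  have h1 : Tendsto (fun n : ℕ => μ (Iic (-(n : ℝ)))) atTop (𝓝 (μ (⋂ n : ℕ, Iic (-(n : ℝ))))) := by
    apply tendsto_measure_iInter_atTop
    · exact fun n => (measurableSet_Iic).nullMeasurableSet
    · intro a b hab
      apply Iic_subset_Iic.2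
      simp only [neg_le_neg_iff]
      exact_mod_cast hab
    · exact ⟨0, measure_ne_top μ _⟩
  have h2 : (⋂ n : ℕ, Iic (-(n : ℝ))) = ∅ := by
    ext x
    simp only [mem_iInter, mem_Iic, mem_empty_iff_false, iff_false]
    push_neg
    obtain ⟨n, hn⟩ := exists_nat_gt (-x)
    exact ⟨n, by linarith⟩
  rw [h2, measure_empty] at h1
  have := (ENNReal.tendsto_toReal (by simp)).comp h1
  exact this

variable [NullSingletonClass μ]

lemma cdf_Iio (t : ℝ) : (μ (Iio t)).toReal = cdf μ t := by
  rw [cdf, measure_congr (Iio_ae_eq_Iic (μ := μ) (a := t))]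

/-- the key fact: the CDF pushes μ forward to the uniform measure. -/
lemma map_cdf : μ.map (cdf μ) = volume.restrict (Ioc 0 (μ univ).toReal) := by
  set c := (μ univ).toReal with hc
  apply Measure.ext_of_Iic
  intro y
  rw [Measure.map_apply (measurable_cdf μ) measurableSet_Iic,
    Measure.restrict_apply measurableSet_Iic]
  have hpre : cdf μ ⁻¹' Iic y = {t | cdf μ t ≤ y} := rfl
  rw [hpre]
  rcases lt_or_ge y 0 with hy | hy
  · have h1 : {t | cdf μ t ≤ y} = ∅ := by
      ext t; simp only [mem_setOf_eq, mem_empty_iff_false, iff_false, not_le]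
      exact lt_of_lt_of_le hy (cdf_nonneg μ t)
    have h2 : Iic y ∩ Ioc 0 c = ∅ := by
      ext t; simp only [mem_inter_iff, mem_Iic, mem_Ioc, mem_empty_iff_false, iff_false]
      rintro ⟨h1', h2', _⟩; linarith
    rw [h1, h2, measure_empty, measure_empty]
  rcases le_or_gt c y with hyc | hyc
  · have h1 : {t | cdf μ t ≤ y} = univ := by
      ext t; simp only [mem_setOf_eq, mem_univ, iff_true]
      exact le_trans (cdf_le μ t) hyc
    have h2 : Iic y ∩ Ioc 0 c = Ioc 0 c := by
      apply inter_eq_self_of_subset_right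
      intro t ht
      exact le_trans ht.2 hyc
    rw [h1, h2, Real.volume_Ioc, sub_zero, hc, ENNReal.ofReal_toReal (measure_ne_top μ _)]
  -- main case 0 ≤ y < c
  have h2 : Iic y ∩ Ioc 0 c = Ioc 0 y := by
    ext t; simp only [mem_inter_iff, mem_Iic, mem_Ioc]
    constructor
    · rintro ⟨h1', h2', _⟩; exact ⟨h2', h1'⟩
    · rintro ⟨h1', h2'⟩; exact ⟨h2', h1', le_trans h2' (le_of_lt hyc)⟩
  rw [h2, Real.volume_Ioc, sub_zero]
  set S := {t | cdf μ t ≤ y} with hS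
  rcases eq_empty_or_nonempty S with hSe | hSne
  · -- then y = 0
    have hy0 : y ≤ 0 := by
      apply ge_of_tendsto (tendsto_cdf_atBot μ)
      filter_upwards with n
      by_contra h
      push_neg at h
      exact (eq_empty_iff_forall_notMem.1 hSe (-(n:ℝ))) (le_of_lt h)
    have : y = 0 := le_antisymm hy0 hy
    rw [hSe, this, measure_empty, ENNReal.ofReal_zero]
  have hbdd : BddAbove S := by
    by_contra hb
    have hcy : c ≤ y := by
      apply le_of_tendsto (tendsto_cdf_atTop μ)
      filter_upwards with n
      obtain ⟨t, htS, htn⟩ := not_bddAbove_iff.1 hb (n : ℝ)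
      exact le_trans (cdf_mono μ (le_of_lt htn)) htS
    linarith
  set T := sSup S with hT
  have hTS : cdf μ T ≤ y := by
    -- via left limits and no atoms
    have hlim : Tendsto (fun n : ℕ => cdf μ (T - ((n:ℝ)+1)⁻¹)) atTop (𝓝 ((μ (Iio T)).toReal)) := by
      have h1 : Tendsto (fun n : ℕ => μ (Iic (T - ((n:ℝ)+1)⁻¹))) atTop (𝓝 (μ (⋃ n : ℕ, Iic (T - ((n:ℝ)+1)⁻¹)))) := by
        apply tendsto_measure_iUnion_atTop
        intro a b hab
        apply Iic_subset_Iic.2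
        have : ((b:ℝ)+1)⁻¹ ≤ ((a:ℝ)+1)⁻¹ := by
          gcongr <;> exact_mod_cast hab
        linarith
      have h2 : (⋃ n : ℕ, Iic (T - ((n:ℝ)+1)⁻¹)) = Iio T := by
        ext x
        simp only [mem_iUnion, mem_Iic, mem_Iio]
        constructor
        · rintro ⟨n, hn⟩
          have : (0:ℝ) < ((n:ℝ)+1)⁻¹ := by positivity
          linarith
        · intro h
          obtain ⟨n, hn⟩ := exists_nat_one_div_lt (sub_pos.2 h)
          rw [one_div] at hn
          exact ⟨n, by linarith⟩
      rw [h2] at h1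
      exact (ENNReal.tendsto_toReal (measure_ne_top μ _)).comp h1
    have hle : ∀ n : ℕ, cdf μ (T - ((n:ℝ)+1)⁻¹) ≤ y := by
      intro n
      have hlt : T - ((n:ℝ)+1)⁻¹ < T := by
        have : (0:ℝ) < ((n:ℝ)+1)⁻¹ := by positivity
        linarith
      obtain ⟨t, htS, htgt⟩ := exists_lt_of_lt_csSup hSne hlt
      exact le_trans (cdf_mono μ (le_of_lt htgt)) htS
    have := le_of_tendsto hlim (Eventually.of_forall hle)
    rwa [cdf_Iio] at this
  have hTmem : T ∈ S := hTS
  have hSIic : S = Iic T := by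
    apply Subset.antisymm
    · exact fun t ht => le_csSup hbdd ht
    · intro t ht
      exact le_trans (cdf_mono μ ht) hTS
  have hTy : cdf μ T = y := by
    refine le_antisymm hTS ?_
    by_contra h
    push_neg at h
    have := tendsto_cdf_right μ T
    have hev : ∀ᶠ n : ℕ in atTop, cdf μ (T + ((n:ℝ)+1)⁻¹) < y :=
      this.eventually (Filter.Tendsto.eventually_lt_const h (by exact tendsto_id) |>.mono fun _ h => h)
    obtain ⟨n, hn⟩ := hev.exists
    have hmem : T + ((n:ℝ)+1)⁻¹ ∈ S := le_of_lt hn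
    have := le_csSup hbdd hmem
    have hpos : (0:ℝ) < ((n:ℝ)+1)⁻¹ := by positivity
    linarith
  rw [hSIic, ← ofReal_cdf μ T, hTy]





variable (μ : Measure ℝ) [IsFiniteMeasure μ] [NullSingletonClass μ]



/-- quantile function, with junk value 0 outside `Ioo 0 c`. -/
def qtile (u : ℝ) : ℝ :=
  if u ∈ Ioo 0 (μ univ).toReal then sInf {t | u ≤ cdf μ t} else 0

lemma qtile_set_nonempty {u : ℝ} (hu : u < (μ univ).toReal) : {t | u ≤ cdf μ t}.Nonempty := by
  have := (tendsto_cdf_atTop μ).eventually_const_lt hu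
  obtain ⟨n, hn⟩ := this.exists
  exact ⟨(n : ℝ), le_of_lt hn⟩

lemma qtile_set_bddBelow {u : ℝ} (hu : 0 < u) : BddBelow {t | u ≤ cdf μ t} := by
  have := (tendsto_cdf_atBot μ).eventually_lt_const hu
  obtain ⟨n, hn⟩ := this.exists
  refine ⟨-(n : ℝ), fun t ht => ?_⟩
  by_contra h
  push_neg at h
  have : cdf μ t ≤ cdf μ (-(n:ℝ)) := cdf_mono μ (le_of_lt h)
  have : u ≤ cdf μ (-(n:ℝ)) := le_trans ht this
  linarith

lemma le_cdf_qtile {u : ℝ} (hu : u ∈ Ioo 0 (μ univ).toReal) : u ≤ cdf μ (qtile μ u) := by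
  rw [qtile, if_pos hu]
  set Q := sInf {t | u ≤ cdf μ t} with hQ
  have hne := qtile_set_nonempty μ hu.2
  have hbdd := qtile_set_bddBelow μ hu.1
  have key : ∀ n : ℕ, u ≤ cdf μ (Q + ((n:ℝ)+1)⁻¹) := by
    intro n
    have hpos : (0:ℝ) < ((n:ℝ)+1)⁻¹ := by positivity
    obtain ⟨t, htS, htlt⟩ := Real.lt_sInf_add_pos hne hpos
    exact le_trans htS (cdf_mono μ (le_of_lt htlt))
  exact ge_of_tendsto (tendsto_cdf_right μ Q) (Eventually.of_forall key)

lemma qtile_le_iff {u t : ℝ} (hu : u ∈ Ioo 0 (μ univ).toReal) :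
    qtile μ u ≤ t ↔ u ≤ cdf μ t := by
  constructor
  · intro h
    exact le_trans (le_cdf_qtile μ hu) (cdf_mono μ h)
  · intro h
    rw [qtile, if_pos hu]
    exact csInf_le (qtile_set_bddBelow μ hu.1) h

lemma qtile_preimage_Iic (t : ℝ) (ht : 0 ≤ t) :
    qtile μ ⁻¹' Iic t = (Ioo 0 (μ univ).toReal ∩ Iic (cdf μ t)) ∪ (Ioo 0 (μ univ).toReal)ᶜ := by
  ext u
  by_cases hu : u ∈ Ioo 0 (μ univ).toReal
  · simp only [mem_preimage, mem_Iic, mem_union, mem_inter_iff, hu, true_and, mem_compl_iff,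
      not_true_eq_false, or_false]
    exact qtile_le_iff μ hu
  · simp only [mem_preimage, mem_Iic, mem_union, mem_inter_iff, hu, false_and, mem_compl_iff,
      not_false_eq_true, or_true, iff_true, qtile, if_neg hu]
    exact ht

lemma qtile_preimage_Iic_neg (t : ℝ) (ht : t < 0) :
    qtile μ ⁻¹' Iic t = Ioo 0 (μ univ).toReal ∩ Iic (cdf μ t) := by
  ext u
  by_cases hu : u ∈ Ioo 0 (μ univ).toReal
  · simp only [mem_preimage, mem_Iic, mem_inter_iff, hu, true_and]
    exact qtile_le_iff μ hu
  · simp only [mem_preimage, mem_Iic, mem_inter_iff, hu, false_and, iff_false, not_le,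
      qtile, if_neg hu]
    exact ht

lemma measurable_qtile : Measurable (qtile μ) := by
  apply measurable_of_Iic
  intro t
  rcases le_or_gt 0 t with ht | ht
  · rw [qtile_preimage_Iic μ t ht]
    exact ((measurableSet_Ioo.inter measurableSet_Iic).union measurableSet_Ioo.compl)
  · rw [qtile_preimage_Iic_neg μ t ht]
    exact measurableSet_Ioo.inter measurableSet_Iic

lemma map_qtile :
    (volume.restrict (Ioo 0 (μ univ).toReal)).map (qtile μ) = μ := by
  set c := (μ univ).toReal with hc
  refine (Measure.ext_of_Iic μ _ fun t => ?_).symm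
  rw [Measure.map_apply (measurable_qtile μ) measurableSet_Iic,
    Measure.restrict_apply ((measurable_qtile μ) measurableSet_Iic)]
  have key : qtile μ ⁻¹' Iic t ∩ Ioo 0 c = Ioo 0 c ∩ Iic (cdf μ t) := by
    rcases le_or_gt 0 t with ht | ht
    · rw [qtile_preimage_Iic μ t ht, union_inter_distrib_right, compl_inter_self, union_empty,
        inter_comm (Ioo 0 c), inter_assoc, inter_self, inter_comm]
    · rw [qtile_preimage_Iic_neg μ t ht, inter_comm (Ioo 0 c), inter_assoc, inter_self, inter_comm]
  rw [key]
  have h1 : cdf μ t ≤ c := cdf_le μ t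
  have h0 : 0 ≤ cdf μ t := cdf_nonneg μ t
  rcases eq_or_lt_of_le h1 with heq | hlt
  · have : Ioo 0 c ∩ Iic (cdf μ t) = Ioo 0 c := by
      apply inter_eq_self_of_subset_left
      intro u hu
      rw [heq]
      exact le_of_lt hu.2
    rw [this, Real.volume_Ioo, sub_zero, ← heq, ofReal_cdf]
  · have : Ioo 0 c ∩ Iic (cdf μ t) = Ioc 0 (cdf μ t) := by
      ext u
      simp only [mem_inter_iff, mem_Ioo, mem_Iic, mem_Ioc]
      constructor
      · rintro ⟨⟨h1', h2'⟩, h3'⟩; exact ⟨h1', h3'⟩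
      · rintro ⟨h1', h2'⟩; exact ⟨⟨h1', lt_of_le_of_lt h2' hlt⟩, h2'⟩
    rw [this, Real.volume_Ioc, sub_zero, ofReal_cdf]




variable {d : ℕ}

lemma not_countable_E (hd : d ≠ 0) : ¬ Countable (EuclideanSpace ℝ (Fin d)) := by
  intro h
  have hv : (EuclideanSpace.single (⟨0, Nat.pos_of_ne_zero hd⟩ : Fin d) (1:ℝ)) ≠ 0 := by
    intro hcontra
    have := congrArg (fun f => f ⟨0, Nat.pos_of_ne_zero hd⟩) hcontra
    simpa using this
  have hinj : Function.Injective
      (fun r : ℝ => r • EuclideanSpace.single (⟨0, Nat.pos_of_ne_zero hd⟩ : Fin d) (1:ℝ)) :=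
    smul_left_injective ℝ hv
  exact not_countable (hinj.countable)

lemma noAtoms_E (hd : d ≠ 0) : NullSingletonClass (volume : Measure (EuclideanSpace ℝ (Fin d))) := by
  haveI : Nontrivial (EuclideanSpace ℝ (Fin d)) := by
    refine ⟨0, EuclideanSpace.single (⟨0, Nat.pos_of_ne_zero hd⟩ : Fin d) (1:ℝ), ?_⟩
    intro hcontra
    have := congrArg (fun f => f ⟨0, Nat.pos_of_ne_zero hd⟩) hcontra
    simpa using this
  infer_instance

/-- from any finite-measure measurable set to any other of the same volume, there is a
measurable map pushing the restricted volume forward to the restricted volume. -/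
lemma exists_pushforward (hd : d ≠ 0) (A B : Set (EuclideanSpace ℝ (Fin d)))
    (hB : MeasurableSet B)
    (hAB : volume A = volume B) (hfin : volume A ≠ ⊤) :
    ∃ τ : EuclideanSpace ℝ (Fin d) → EuclideanSpace ℝ (Fin d), Measurable τ ∧
      (volume.restrict A).map τ = volume.restrict B := by
  haveI := noAtoms_E hd
  have hRn : ¬ Countable ℝ := not_countable
  set e : EuclideanSpace ℝ (Fin d) ≃ᵐ ℝ :=
    PolishSpace.measurableEquivOfNotCountable (not_countable_E hd) hRn with he
  set μA : Measure ℝ := (volume.restrict A).map e with hμA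
  set μB : Measure ℝ := (volume.restrict B).map e with hμB
  have hAuniv : μA univ = volume A := by
    rw [hμA, Measure.map_apply e.measurable MeasurableSet.univ, preimage_univ,
      Measure.restrict_apply MeasurableSet.univ, univ_inter]
  have hBuniv : μB univ = volume B := by
    rw [hμB, Measure.map_apply e.measurable MeasurableSet.univ, preimage_univ,
      Measure.restrict_apply MeasurableSet.univ, univ_inter]
  haveI : IsFiniteMeasure μA := ⟨by rw [hAuniv]; exact hfin.lt_top⟩
  haveI : IsFiniteMeasure μB := ⟨by rw [hBuniv, ← hAB]; exact hfin.lt_top⟩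
  have hatomless : ∀ (C : Set (EuclideanSpace ℝ (Fin d))),
      NullSingletonClass ((volume.restrict C).map e) := by
    intro C
    constructor
    intro y
    rw [Measure.map_apply e.measurable (measurableSet_singleton y)]
    have : e ⁻¹' {y} = {e.symm y} := by
      ext x
      simp only [mem_preimage, mem_singleton_iff]
      exact ⟨fun h => by rw [← h]; simp, fun h => by rw [h]; simp⟩
    rw [this]
    exact le_antisymm (le_trans (Measure.restrict_le_self _)
      (le_of_eq (measure_singleton _))) zero_le
  haveI : NullSingletonClass μA := hatomless A
  haveI : NullSingletonClass μB := hatomless B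
  refine ⟨e.symm ∘ qtile μB ∘ cdf μA ∘ e, by
    exact e.symm.measurable.comp ((measurable_qtile μB).comp
      ((measurable_cdf μA).comp e.measurable)), ?_⟩
  have hmm : (volume.restrict A).map (e.symm ∘ qtile μB ∘ cdf μA ∘ e)
      = ((((volume.restrict A).map e).map (cdf μA)).map (qtile μB)).map e.symm := by
    rw [Measure.map_map (measurable_cdf μA) e.measurable,
      Measure.map_map (measurable_qtile μB) ((measurable_cdf μA).comp e.measurable),
      Measure.map_map e.symm.measurable (((measurable_qtile μB).comp
        ((measurable_cdf μA).comp e.measurable)))]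
  rw [hmm, ← hμA, map_cdf μA]
  have hcc : (μA univ).toReal = (μB univ).toReal := by rw [hAuniv, hBuniv, hAB]
  have hres : volume.restrict (Ioc 0 (μA univ).toReal)
      = volume.restrict (Ioo 0 (μB univ).toReal) := by
    rw [hcc]
    exact (Measure.restrict_congr_set Ioo_ae_eq_Ioc).symm
  rw [hres, map_qtile μB, hμB,
    Measure.map_map e.symm.measurable e.measurable]
  simp only [MeasurableEquiv.symm_comp_self, Measure.map_id]



open scoped RealInnerProductSpace

variable {N : ℕ}

lemma volume_inner_eq (v : EuclideanSpace ℝ (Fin d)) (hv : v ≠ 0) (r : ℝ) :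
    volume {x : EuclideanSpace ℝ (Fin d) | ⟪v, x⟫ = r} = 0 := by
  set K : Submodule ℝ (EuclideanSpace ℝ (Fin d)) := LinearMap.ker (innerSL ℝ v : EuclideanSpace ℝ (Fin d) →ₗ[ℝ] ℝ) with hK
  have hKne : K ≠ ⊤ := by
    intro h
    have hvK : v ∈ K := h ▸ Submodule.mem_top
    rw [hK, LinearMap.mem_ker] at hvK
    simp only [ContinuousLinearMap.coe_coe, innerSL_apply_apply] at hvK
    exact hv (inner_self_eq_zero.1 hvK)
  set x₀ : EuclideanSpace ℝ (Fin d) := (r / ‖v‖ ^ 2) • v with hx₀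
  have hvx₀ : ⟪v, x₀⟫ = r := by
    rw [hx₀, real_inner_smul_right, real_inner_self_eq_norm_sq]
    field_simp [norm_ne_zero_iff.2 hv]
  have hset : {x : EuclideanSpace ℝ (Fin d) | ⟪v, x⟫ = r} = (· + (-x₀)) ⁻¹' (K : Set _) := by
    ext x
    simp only [mem_setOf_eq, mem_preimage, SetLike.mem_coe, hK, LinearMap.mem_ker, ContinuousLinearMap.coe_coe, innerSL_apply_apply]
    rw [← sub_eq_add_neg, inner_sub_right, hvx₀, sub_eq_zero]
  rw [hset, measure_preimage_add_right]
  exact Measure.addHaar_submodule volume K hKne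

lemma lag_measurable (M : Fin N → EuclideanSpace ℝ (Fin d)) (ψ : Fin N → ℝ) (i : Fin N) :
    MeasurableSet (Lag M ψ i) := by
  have : IsClosed (Lag M ψ i) := by
    have : Lag M ψ i = ⋂ j, {x | ‖x - M i‖ ^ 2 + ψ i ≤ ‖x - M j‖ ^ 2 + ψ j} := by
      ext x; simp [Lag, mem_iInter]
    rw [this]
    refine isClosed_iInter fun j => isClosed_le (by fun_prop) (by fun_prop)
  exact this.measurableSet

lemma lag_cover (hN : 0 < N) (M : Fin N → EuclideanSpace ℝ (Fin d)) (ψ : Fin N → ℝ) :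
    (⋃ i, Lag M ψ i) = univ := by
  ext x
  simp only [mem_iUnion, mem_univ, iff_true]
  haveI : Nonempty (Fin N) := ⟨⟨0, hN⟩⟩
  obtain ⟨i, -, hi⟩ := Finset.exists_min_image Finset.univ
    (fun j => ‖x - M j‖ ^ 2 + ψ j) ⟨Classical.arbitrary (Fin N), Finset.mem_univ _⟩
  exact ⟨i, fun j => hi j (Finset.mem_univ j)⟩

lemma lag_null_inter (M : Fin N → EuclideanSpace ℝ (Fin d)) (hM : Function.Injective M)
    (ψ : Fin N → ℝ) {i j : Fin N} (hij : i ≠ j) :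
    volume (Lag M ψ i ∩ Lag M ψ j) = 0 := by
  set v : EuclideanSpace ℝ (Fin d) := M j - M i with hv
  have hvne : v ≠ 0 := sub_ne_zero.2 fun h => hij (hM h.symm)
  set r : ℝ := (‖M j‖ ^ 2 + ψ j - ‖M i‖ ^ 2 - ψ i) / 2 with hr
  have hsub : Lag M ψ i ∩ Lag M ψ j ⊆ {x | ⟪v, x⟫ = r} := by
    intro x ⟨hxi, hxj⟩
    have h1 := hxi j
    have h2 := hxj i
    have heq : ‖x - M i‖ ^ 2 + ψ i = ‖x - M j‖ ^ 2 + ψ j := le_antisymm h1 h2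
    rw [norm_sub_sq_real, norm_sub_sq_real] at heq
    have hinner : ⟪v, x⟫ = ⟪x, M j⟫ - ⟪x, M i⟫ := by
      rw [hv, inner_sub_left, real_inner_comm (M j) x, real_inner_comm (M i) x]
    simp only [mem_setOf_eq, hinner, hr]
    linarith
  exact measure_mono_null hsub (volume_inner_eq v hvne r)

/-! ### disjointification -/

def dj {α : Type*} (f : Fin N → Set α) (i : Fin N) : Set α :=
  f i \ ⋃ j : Fin N, ⋃ (_ : j < i), f j

lemma dj_subset {α : Type*} (f : Fin N → Set α) (i : Fin N) : dj f i ⊆ f i := diff_subset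

lemma dj_disjoint {α : Type*} (f : Fin N → Set α) : Pairwise (Function.onFun Disjoint (dj f)) := by
  intro i j hij
  wlog h : i < j generalizing i j
  · exact (this hij.symm ((hij.lt_or_gt).resolve_left h)).symm
  refine Set.disjoint_left.2 fun x hxi hxj => ?_
  exact hxj.2 (mem_iUnion.2 ⟨i, mem_iUnion.2 ⟨h, hxi.1⟩⟩)

lemma dj_measurable {α : Type*} [MeasurableSpace α] {f : Fin N → Set α}
    (hf : ∀ i, MeasurableSet (f i)) (i : Fin N) : MeasurableSet (dj f i) :=
  (hf i).diff (MeasurableSet.iUnion fun j => MeasurableSet.iUnion fun _ => hf j)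

lemma iUnion_dj {α : Type*} (f : Fin N → Set α) : ⋃ i, dj f i = ⋃ i, f i := by
  classical
  apply Subset.antisymm (iUnion_mono fun i => dj_subset f i)
  intro x hx
  have hne : (Finset.univ.filter fun i => x ∈ f i).Nonempty := by
    obtain ⟨i, hi⟩ := mem_iUnion.1 hx
    exact ⟨i, Finset.mem_filter.2 ⟨Finset.mem_univ _, hi⟩⟩
  set i₀ := (Finset.univ.filter fun i => x ∈ f i).min' hne with hi₀
  refine mem_iUnion.2 ⟨i₀, ?_, ?_⟩
  · exact (Finset.mem_filter.1 ((Finset.univ.filter fun i => x ∈ f i).min'_mem hne)).2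
  · intro hmem
    obtain ⟨j, hj⟩ := mem_iUnion.1 hmem
    obtain ⟨hjlt, hxj⟩ := mem_iUnion.1 hj
    have : i₀ ≤ j := Finset.min'_le _ j (Finset.mem_filter.2 ⟨Finset.mem_univ _, hxj⟩)
    exact absurd hjlt (not_lt.2 this)

lemma dj_diff_null {α : Type*} [MeasurableSpace α] {μ : Measure α} {f : Fin N → Set α}
    (hf : Pairwise fun i j => μ (f i ∩ f j) = 0) (i : Fin N) : μ (f i \ dj f i) = 0 := by
  have hsub : f i \ dj f i ⊆ ⋃ j : Fin N, ⋃ (_ : j < i), f i ∩ f j := by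
    intro x hx
    have hx1 : x ∈ f i := hx.1
    have hx2 := hx.2
    rw [dj, mem_diff, not_and, not_not] at hx2
    obtain ⟨j, hj⟩ := mem_iUnion.1 (hx2 hx1)
    obtain ⟨hjlt, hxj⟩ := mem_iUnion.1 hj
    exact mem_iUnion.2 ⟨j, mem_iUnion.2 ⟨hjlt, hx1, hxj⟩⟩
  refine measure_mono_null hsub ?_
  refine measure_iUnion_null fun j => measure_iUnion_null fun hj => hf (fun h => absurd hj (h ▸ lt_irrefl i) : i ≠ j)

lemma dj_ae_eq {α : Type*} [MeasurableSpace α] {μ : Measure α} {f : Fin N → Set α}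
    (hf : Pairwise fun i j => μ (f i ∩ f j) = 0) (i : Fin N) : dj f i =ᵐ[μ] f i := by
  have h1 : μ (f i \ dj f i) = 0 := dj_diff_null hf i
  have h2 : μ (dj f i \ f i) = 0 := by
    rw [diff_eq_empty.2 (dj_subset f i)]; exact measure_empty
  exact MeasureTheory.ae_eq_set.2 ⟨h2, h1⟩

lemma dj_volume_eq {α : Type*} [MeasurableSpace α] {μ : Measure α} {f : Fin N → Set α}
    (hf : Pairwise fun i j => μ (f i ∩ f j) = 0) (i : Fin N) : μ (dj f i) = μ (f i) :=
  measure_congr (dj_ae_eq hf i)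


/-- squared L² distance as an integral. -/
lemma dist_sq_eq_integral {d : ℕ} {Ω : Set (EuclideanSpace ℝ (Fin d))}
    (f g : Lp (EuclideanSpace ℝ (Fin d)) 2 (volume.restrict Ω)) :
    dist f g ^ 2 = ∫ x, ‖f x - g x‖ ^ 2 ∂(volume.restrict Ω) := by
  rw [dist_eq_norm, ← real_inner_self_eq_norm_sq, MeasureTheory.L2.inner_def]
  apply integral_congr_ae
  filter_upwards [MeasureTheory.Lp.coeFn_sub f g] with a ha
  rw [ha, Pi.sub_apply, real_inner_self_eq_norm_sq]

lemma integrable_sq_diff {d : ℕ} {Ω : Set (EuclideanSpace ℝ (Fin d))}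
    (f g : Lp (EuclideanSpace ℝ (Fin d)) 2 (volume.restrict Ω)) :
    Integrable (fun x => ‖f x - g x‖ ^ 2) (volume.restrict Ω) := by
  have h2 := (memLp_two_iff_integrable_sq_norm (Lp.aestronglyMeasurable (f - g))).1
    (Lp.memLp (f - g))
  apply h2.congr
  filter_upwards [Lp.coeFn_sub f g] with a ha
  rw [ha, Pi.sub_apply]

end Stmt11Aux

open Stmt11Aux in
set_option maxHeartbeats 1000000 in
/-- **Squared distance to the measure-preserving maps via Laguerre cells.**
Let `Ω ⊂ ℝ^d` be a bounded connected open set with an equal-volume partition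
`(ω_i)_{1≤i≤N}`, let `m ∈ M_N` take the pairwise distinct values `M_i` on `ω_i`, and let
`ψ ∈ ℝ^N` be such that each Laguerre cell `L_i = Lag_i(M,ψ) ∩ Ω` has measure `Leb(Ω)/N`.
Then `d_S(m)² = Σ_i ∫_{L_i} ‖x − M_i‖² dx`. -/
theorem stmt11 {d N : ℕ} (hN : 0 < N)
    (Ω : Set (EuclideanSpace ℝ (Fin d))) (hΩo : IsOpen Ω)
    (hΩb : Bornology.IsBounded Ω) (hΩc : IsConnected Ω)
    (ω : Fin N → Set (EuclideanSpace ℝ (Fin d)))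
    (hωmeas : ∀ i, MeasurableSet (ω i))
    (hωsub : ∀ i, ω i ⊆ Ω)
    (hωdisj : Pairwise fun i j => volume (ω i ∩ ω j) = 0)
    (hωcover : volume (Ω \ ⋃ i, ω i) = 0)
    (hωvol : ∀ i, volume (ω i) = volume Ω / N)
    (m : Lp (EuclideanSpace ℝ (Fin d)) 2 (volume.restrict Ω))
    (Mi : Fin N → EuclideanSpace ℝ (Fin d)) (hMi : Function.Injective Mi)
    (hm : ∀ i, ∀ᵐ x ∂((volume.restrict Ω).restrict (ω i)), m x = Mi i)
    (ψ : Fin N → ℝ)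
    (hψ : ∀ i, volume (Lag Mi ψ i ∩ Ω) = volume Ω / N) :
    Metric.infDist m (MPmaps Ω) ^ 2
      = ∑ i : Fin N, ∫ x in Lag Mi ψ i ∩ Ω, ‖x - Mi i‖ ^ 2 := by
  classical
  by_cases hd : d = 0
  · -- degenerate case: the space is a single point
    subst hd
    haveI : Subsingleton (EuclideanSpace ℝ (Fin 0)) :=
      inferInstance
    have hm_id : ⇑m = id := funext fun x => Subsingleton.elim _ _
    have hmem : m ∈ MPmaps Ω := by
      show Measure.map (⇑m) (volume.restrict Ω) = volume.restrict Ω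
      rw [hm_id, Measure.map_id]
    have h0 : Metric.infDist m (MPmaps Ω) = 0 := by
      refine le_antisymm ?_ Metric.infDist_nonneg
      have h := Metric.infDist_le_dist_of_mem (x := m) hmem
      simpa using h
    rw [h0]
    have hz : ∀ i : Fin N, (∫ x in Lag Mi ψ i ∩ Ω, ‖x - Mi i‖ ^ 2) = 0 := by
      intro i
      have he : (fun x : EuclideanSpace ℝ (Fin 0) => ‖x - Mi i‖ ^ 2) = fun _ => (0:ℝ) := by
        funext x
        rw [Subsingleton.elim x (Mi i), sub_self, norm_zero]
        ring
      rw [he, integral_zero]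
    rw [Finset.sum_congr rfl fun i _ => hz i, Finset.sum_const_zero]
    ring
  -- main case d ≠ 0
  have hΩm : MeasurableSet Ω := hΩo.measurableSet
  have hΩfin : volume Ω ≠ ⊤ := hΩb.measure_lt_top.ne
  obtain ⟨R, hR⟩ := hΩb.subset_closedBall 0
  have hR0 : 0 ≤ R := by
    obtain ⟨x₀, hx₀⟩ := hΩc.nonempty
    have := hR hx₀
    rw [Metric.mem_closedBall] at this
    exact le_trans dist_nonneg this
  haveI : IsFiniteMeasure (volume.restrict Ω) :=
    ⟨by rw [Measure.restrict_apply_univ]; exact hΩfin.lt_top⟩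
  have hnorm_le : ∀ y ∈ Ω, ‖y‖ ≤ R := by
    intro y hy
    have := hR hy
    rwa [Metric.mem_closedBall, dist_zero_right] at this
  set L : Fin N → Set (EuclideanSpace ℝ (Fin d)) := fun i => Lag Mi ψ i ∩ Ω with hLdef
  have hLm : ∀ i, MeasurableSet (L i) := fun i => (lag_measurable Mi ψ i).inter hΩm
  have hLsub : ∀ i, L i ⊆ Ω := fun i => Set.inter_subset_right
  have hLUnion : ⋃ i, L i = Ω := by
    simp only [hLdef]
    rw [← Set.iUnion_inter, lag_cover hN Mi ψ, Set.univ_inter]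
  have hLnull : Pairwise fun i j => volume (L i ∩ L j) = 0 := by
    intro i j hij
    refine measure_mono_null ?_ (lag_null_inter Mi hMi ψ hij)
    intro x hx
    exact ⟨hx.1.1, hx.2.1⟩
  set ω' := dj ω with hω'def
  set L' := dj L with hL'def
  have hω'm : ∀ i, MeasurableSet (ω' i) := dj_measurable hωmeas
  have hL'm : ∀ i, MeasurableSet (L' i) := dj_measurable hLm
  have hω'sub : ∀ i, ω' i ⊆ Ω := fun i => (dj_subset ω i).trans (hωsub i)
  have hL'sub : ∀ i, L' i ⊆ Ω := fun i => (dj_subset L i).trans (hLsub i)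
  have hω'vol : ∀ i, volume (ω' i) = volume Ω / N := fun i =>
    (dj_volume_eq hωdisj i).trans (hωvol i)
  have hL'vol : ∀ i, volume (L' i) = volume Ω / N := fun i =>
    (dj_volume_eq hLnull i).trans (hψ i)
  have hL'ae : ∀ i, L' i =ᵐ[volume] L i := fun i => dj_ae_eq hLnull i
  have hNcast : (N : ENNReal) ≠ 0 := Nat.cast_ne_zero.2 hN.ne'
  have hκfin : volume Ω / N ≠ ⊤ := (ENNReal.div_lt_top hΩfin hNcast).ne
  -- restricted measures
  have hrestrω' : ∀ i, (volume.restrict Ω).restrict (ω' i) = volume.restrict (ω' i) := by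
    intro i
    rw [Measure.restrict_restrict (hω'm i),
      Set.inter_eq_self_of_subset_left (hω'sub i)]
  have hrestrL' : ∀ i, (volume.restrict Ω).restrict (L' i) = volume.restrict (L' i) := by
    intro i
    rw [Measure.restrict_restrict (hL'm i),
      Set.inter_eq_self_of_subset_left (hL'sub i)]
  -- a.e. value of m
  have h3 : ∀ i, ∀ᵐ x ∂(volume.restrict Ω), x ∈ ω i → m x = Mi i := fun i =>
    (ae_restrict_iff' (hωmeas i)).1 (hm i)
  -- transport maps
  have hτ : ∀ i, ∃ τ, Measurable τ ∧ (volume.restrict (ω' i)).map τ = volume.restrict (L' i) := by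
    intro i
    apply exists_pushforward hd (ω' i) (L' i) (hL'm i)
    · rw [hω'vol i, hL'vol i]
    · rw [hω'vol i]; exact hκfin
  choose τ hτm hτmap using hτ
  set U := ⋃ i, ω' i with hUdef
  have hUm : MeasurableSet U := MeasurableSet.iUnion hω'm
  have hUsub : U ⊆ Ω := Set.iUnion_subset hω'sub
  have hUae : Ω =ᵐ[volume] U := by
    refine MeasureTheory.ae_eq_set.2 ⟨?_, ?_⟩
    · rw [hUdef, hω'def, iUnion_dj]; exact hωcover
    · rw [Set.diff_eq_empty.2 hUsub]; exact measure_empty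
  have hresU : (volume.restrict Ω) = volume.restrict U := Measure.restrict_congr_set hUae
  set s₀ : EuclideanSpace ℝ (Fin d) → EuclideanSpace ℝ (Fin d) :=
    fun x => ∑ i : Fin N, (ω' i).indicator (τ i) x with hs₀def
  have hs₀meas : Measurable s₀ :=
    Finset.measurable_sum _ fun i _ => (hτm i).indicator (hω'm i)
  have hs₀eq : ∀ i, ∀ x ∈ ω' i, s₀ x = τ i x := by
    intro i x hx
    simp only [hs₀def]
    rw [Finset.sum_eq_single i]
    · exact Set.indicator_of_mem hx _
    · intro j _ hji
      exact Set.indicator_of_notMem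
        (fun hxj => Set.disjoint_left.1 (dj_disjoint ω hji) hxj hx) _
    · exact fun h => absurd (Finset.mem_univ i) h
  -- pushforward property of s₀
  have hs₀push : Measure.map s₀ (volume.restrict Ω) = (volume.restrict Ω) := by
    ext A hA
    rw [Measure.map_apply hs₀meas hA]
    conv_lhs => rw [hresU]
    rw [Measure.restrict_apply' hUm]
    have h1 : s₀ ⁻¹' A ∩ U = ⋃ i, (s₀ ⁻¹' A ∩ ω' i) := by
      rw [hUdef, Set.inter_iUnion]
    rw [h1, measure_iUnion
        (fun i j hij => ((dj_disjoint ω hij).mono Set.inter_subset_right Set.inter_subset_right))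
        (fun i => (hs₀meas hA).inter (hω'm i)), tsum_fintype]
    have h2 : ∀ i, volume (s₀ ⁻¹' A ∩ ω' i) = volume (A ∩ L' i) := by
      intro i
      have h3' : s₀ ⁻¹' A ∩ ω' i = τ i ⁻¹' A ∩ ω' i := by
        ext x
        simp only [Set.mem_inter_iff, Set.mem_preimage]
        exact and_congr_left fun hx => by rw [hs₀eq i x hx]
      rw [h3', ← Measure.restrict_apply' (hω'm i), ← Measure.map_apply (hτm i) hA,
        hτmap i, Measure.restrict_apply' (hL'm i)]
    have h6 : (⋃ i, (A ∩ L' i)) = A ∩ Ω := by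
      rw [← Set.inter_iUnion, hL'def, iUnion_dj, hLUnion]
    have h5 := measure_iUnion (μ := volume) (f := fun i => A ∩ L' i)
        (fun i j hij => ((dj_disjoint L hij).mono Set.inter_subset_right Set.inter_subset_right))
        (fun i => hA.inter (hL'm i))
    rw [h6, tsum_fintype] at h5
    rw [Finset.sum_congr rfl fun i _ => h2 i, ← h5, Measure.restrict_apply' hΩm]
  -- membership of s₀ in L²
  have hcont2 : Continuous (fun y : EuclideanSpace ℝ (Fin d) => ‖y‖ ^ 2) := by fun_prop
  have hynorm : Integrable (fun y : EuclideanSpace ℝ (Fin d) => ‖y‖ ^ 2) (volume.restrict Ω) := by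
    apply Integrable.mono' (integrable_const (R ^ 2)) hcont2.aestronglyMeasurable
    filter_upwards [ae_restrict_mem hΩm] with y hy
    rw [Real.norm_of_nonneg (by positivity)]
    exact pow_le_pow_left₀ (norm_nonneg y) (hnorm_le y hy) 2
  have hs₀sq : Integrable (fun x => ‖s₀ x‖ ^ 2) (volume.restrict Ω) := by
    have h : Integrable (fun y : EuclideanSpace ℝ (Fin d) => ‖y‖ ^ 2)
        (Measure.map s₀ (volume.restrict Ω)) := by
      rw [hs₀push]; exact hynorm
    have h2 := (integrable_map_measure hcont2.aestronglyMeasurable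
      hs₀meas.aemeasurable).1 h
    exact h2
  have hs₀mem : MemLp s₀ 2 (volume.restrict Ω) :=
    (memLp_two_iff_integrable_sq_norm hs₀meas.aestronglyMeasurable).2 hs₀sq
  set S₀ := hs₀mem.toLp s₀ with hS₀def
  have hS₀coe : ⇑S₀ =ᵐ[(volume.restrict Ω)] s₀ := hs₀mem.coeFn_toLp
  have hS₀mem : S₀ ∈ MPmaps Ω := by
    show Measure.map (⇑S₀) (volume.restrict Ω) = volume.restrict Ω
    rw [Measure.map_congr hS₀coe, hs₀push]
  -- upper bound: the distance to S₀ realizes the target value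
  have hup : dist m S₀ ^ 2 = ∑ i : Fin N, ∫ x in Lag Mi ψ i ∩ Ω, ‖x - Mi i‖ ^ 2 := by
    rw [dist_sq_eq_integral m S₀]
    have hint : Integrable (fun x => ‖m x - S₀ x‖ ^ 2) (volume.restrict Ω) := integrable_sq_diff m S₀
    have e1 : ∫ x, ‖m x - S₀ x‖ ^ 2 ∂(volume.restrict Ω) = ∫ x, ‖m x - s₀ x‖ ^ 2 ∂(volume.restrict Ω) :=
      integral_congr_ae (by filter_upwards [hS₀coe] with a ha; rw [ha])
    have hint2 : Integrable (fun x => ‖m x - s₀ x‖ ^ 2) (volume.restrict Ω) :=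
      hint.congr (by filter_upwards [hS₀coe] with a ha; rw [ha])
    rw [e1]
    have e2 : ∫ x, ‖m x - s₀ x‖ ^ 2 ∂(volume.restrict Ω) = ∫ x in U, ‖m x - s₀ x‖ ^ 2 ∂volume := by
        exact setIntegral_congr_set hUae
    rw [e2, integral_iUnion hω'm (dj_disjoint ω) ?hfi, tsum_fintype]
    case hfi =>
      have hUeq : volume.restrict U = (volume.restrict Ω).restrict U := by
        rw [Measure.restrict_restrict hUm, Set.inter_eq_self_of_subset_left hUsub]
      show Integrable _ (volume.restrict U)
      rw [hUeq]
      exact hint2.restrict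
    apply Finset.sum_congr rfl
    intro i _
    have hmi : ∀ᵐ x ∂(volume.restrict (ω' i)), m x = Mi i := by
      rw [← hrestrω' i]
      have h4 := ae_restrict_of_ae (s := ω' i) (h3 i)
      filter_upwards [h4, ae_restrict_mem (μ := (volume.restrict Ω)) (hω'm i)] with x hx1 hx2
      exact hx1 (dj_subset ω i hx2)
    have e3 : ∫ x in ω' i, ‖m x - s₀ x‖ ^ 2 ∂volume
        = ∫ x in ω' i, ‖τ i x - Mi i‖ ^ 2 ∂volume := by
      apply integral_congr_ae
      filter_upwards [hmi, ae_restrict_mem (hω'm i)] with x h1 h2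
      rw [hs₀eq i x h2, h1, norm_sub_rev]
    have hgc : Continuous (fun y : EuclideanSpace ℝ (Fin d) => ‖y - Mi i‖ ^ 2) := by fun_prop
    have e4 : ∫ x in ω' i, ‖τ i x - Mi i‖ ^ 2 ∂volume
        = ∫ y in L' i, ‖y - Mi i‖ ^ 2 ∂volume := by
      rw [← integral_map (hτm i).aemeasurable hgc.aestronglyMeasurable, hτmap i]
    rw [e3, e4]
    exact setIntegral_congr_set (hL'ae i)
  -- lower bound
  have hlow : ∀ f : Lp (EuclideanSpace ℝ (Fin d)) 2 (volume.restrict Ω), f ∈ MPmaps Ω →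
      (∑ i : Fin N, ∫ x in Lag Mi ψ i ∩ Ω, ‖x - Mi i‖ ^ 2) ≤ dist m f ^ 2 := by
    intro f hf
    have hfmap : Measure.map (⇑f) (volume.restrict Ω) = (volume.restrict Ω) := hf
    have hfaem : AEMeasurable (⇑f) (volume.restrict Ω) := (Lp.aestronglyMeasurable f).aemeasurable
    rw [dist_sq_eq_integral m f]
    set φ : EuclideanSpace ℝ (Fin d) → ℝ :=
      fun y => ∑ i : Fin N, (L' i).indicator (fun y => ‖y - Mi i‖ ^ 2 + ψ i) y with hφdef
    set g : EuclideanSpace ℝ (Fin d) → ℝ :=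
      fun x => ∑ i : Fin N, (ω' i).indicator (fun _ => ψ i) x with hgdef
    have hφi_cont : ∀ i : Fin N,
        Continuous (fun y : EuclideanSpace ℝ (Fin d) => ‖y - Mi i‖ ^ 2 + ψ i) := by
      intro i; fun_prop
    have hφmeas : Measurable φ := Finset.measurable_sum _ fun i _ =>
      ((hφi_cont i).measurable).indicator (hL'm i)
    have hgmeas : Measurable g := Finset.measurable_sum _ fun i _ =>
      measurable_const.indicator (hω'm i)
    -- bounds
    set B : ℝ := ∑ i : Fin N, ((R + ‖Mi i‖) ^ 2 + |ψ i|) with hBdef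
    have hφbound : ∀ y, |φ y| ≤ B := by
      intro y
      refine le_trans (Finset.abs_sum_le_sum_abs _ _) (Finset.sum_le_sum fun i _ => ?_)
      by_cases hy : y ∈ L' i
      · rw [Set.indicator_of_mem hy]
        have hy1 : ‖y‖ ≤ R := hnorm_le y (hL'sub i hy)
        have hy2 : ‖y - Mi i‖ ≤ R + ‖Mi i‖ :=
          le_trans (norm_sub_le y (Mi i)) (by linarith)
        have hy3 : ‖y - Mi i‖ ^ 2 ≤ (R + ‖Mi i‖) ^ 2 :=
          pow_le_pow_left₀ (norm_nonneg _) hy2 2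
        calc |‖y - Mi i‖ ^ 2 + ψ i| ≤ |‖y - Mi i‖ ^ 2| + |ψ i| := abs_add_le _ _
          _ ≤ (R + ‖Mi i‖) ^ 2 + |ψ i| := by
              rw [abs_of_nonneg (by positivity)]; linarith
      · rw [Set.indicator_of_notMem hy, abs_zero]
        positivity
    have hgbound : ∀ x, |g x| ≤ ∑ i : Fin N, |ψ i| := by
      intro x
      refine le_trans (Finset.abs_sum_le_sum_abs _ _) (Finset.sum_le_sum fun i _ => ?_)
      by_cases hx : x ∈ ω' i
      · rw [Set.indicator_of_mem hx]
      · rw [Set.indicator_of_notMem hx, abs_zero]; positivity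
    have hφf_int : Integrable (fun x => φ (f x)) (volume.restrict Ω) := by
      apply Integrable.mono' (integrable_const B)
        ((hφmeas.comp_aemeasurable hfaem).aestronglyMeasurable)
      filter_upwards with x
      rw [Real.norm_eq_abs]
      exact hφbound (f x)
    have hg_int : Integrable g (volume.restrict Ω) := by
      apply Integrable.mono' (integrable_const (∑ i : Fin N, |ψ i|))
        hgmeas.aestronglyMeasurable
      filter_upwards with x
      rw [Real.norm_eq_abs]
      exact hgbound x
    -- a.e. inequality
    have hae : ∀ᵐ x ∂(volume.restrict Ω), φ (f x) - g x ≤ ‖m x - f x‖ ^ 2 := by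
      have h1 : ∀ᵐ x ∂(volume.restrict Ω), f x ∈ Ω := by
        have hc : (volume.restrict Ω) (⇑f ⁻¹' Ωᶜ) = 0 := by
          have hh := Measure.map_apply_of_aemeasurable hfaem hΩm.compl
          rw [hfmap] at hh
          rw [← hh, Measure.restrict_apply' hΩm, Set.compl_inter_self,
            measure_empty]
        rw [ae_iff]
        exact hc
      have h2 : ∀ᵐ x ∂(volume.restrict Ω), x ∈ U := by
        rw [ae_iff]
        rw [Measure.restrict_apply' hΩm]
        apply measure_mono_null (fun x hx => ?_) hωcover
        · obtain ⟨hx1, hx2⟩ := hx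
          refine ⟨hx2, fun hx3 => hx1 ?_⟩
          rw [hUdef, hω'def, iUnion_dj]
          exact hx3
      have h3' : ∀ᵐ x ∂(volume.restrict Ω), ∀ i, x ∈ ω i → m x = Mi i := ae_all_iff.2 h3
      filter_upwards [h1, h2, h3'] with x hfx hxU hmx
      obtain ⟨i, hxi⟩ := Set.mem_iUnion.1 hxU
      have hgx : g x = ψ i := by
        simp only [hgdef]
        rw [Finset.sum_eq_single i]
        · exact Set.indicator_of_mem hxi _
        · intro j _ hji
          exact Set.indicator_of_notMem
            (fun hxj => Set.disjoint_left.1 (dj_disjoint ω hji) hxj hxi) _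
        · exact fun h => absurd (Finset.mem_univ i) h
      have hfxU : f x ∈ ⋃ j, L' j := by
        rw [hL'def, iUnion_dj, hLUnion]
        exact hfx
      obtain ⟨j, hfxj⟩ := Set.mem_iUnion.1 hfxU
      have hφval : φ (f x) = ‖f x - Mi j‖ ^ 2 + ψ j := by
        simp only [hφdef]
        rw [Finset.sum_eq_single j]
        · exact Set.indicator_of_mem hfxj _
        · intro k _ hkj
          exact Set.indicator_of_notMem
            (fun hxk => Set.disjoint_left.1 (dj_disjoint L hkj) hxk hfxj) _
        · exact fun h => absurd (Finset.mem_univ j) h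
      have hlag : f x ∈ Lag Mi ψ j := (dj_subset L j hfxj).1
      have hineq : ‖f x - Mi j‖ ^ 2 + ψ j ≤ ‖f x - Mi i‖ ^ 2 + ψ i := hlag i
      have hmxi : m x = Mi i := hmx i (dj_subset ω i hxi)
      rw [hφval, hgx, hmxi, norm_sub_rev (Mi i) (f x)]
      linarith
    have hle : ∫ x, (φ (f x) - g x) ∂(volume.restrict Ω) ≤ ∫ x, ‖m x - f x‖ ^ 2 ∂(volume.restrict Ω) :=
      integral_mono_ae (hφf_int.sub hg_int) (integrable_sq_diff m f) hae
    -- compute the left integral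
    have hind_int : ∀ i : Fin N,
        Integrable ((L' i).indicator (fun y => ‖y - Mi i‖ ^ 2 + ψ i)) (volume.restrict Ω) := by
      intro i
      apply Integrable.indicator ?_ (hL'm i)
      apply Integrable.mono' (integrable_const ((R + ‖Mi i‖) ^ 2 + |ψ i|))
        (hφi_cont i).aestronglyMeasurable
      filter_upwards [ae_restrict_mem hΩm] with y hy
      have hy2 : ‖y - Mi i‖ ≤ R + ‖Mi i‖ :=
        le_trans (norm_sub_le y (Mi i)) (by have := hnorm_le y hy; linarith)
      have hy3 : ‖y - Mi i‖ ^ 2 ≤ (R + ‖Mi i‖) ^ 2 := pow_le_pow_left₀ (norm_nonneg _) hy2 2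
      calc ‖‖y - Mi i‖ ^ 2 + ψ i‖ ≤ |‖y - Mi i‖ ^ 2| + |ψ i| := abs_add_le _ _
        _ ≤ (R + ‖Mi i‖) ^ 2 + |ψ i| := by
            rw [abs_of_nonneg (by positivity)]; linarith
    have hind_intg : ∀ i : Fin N,
        Integrable ((ω' i).indicator (fun _ => ψ i)) (volume.restrict Ω) := by
      intro i
      apply Integrable.indicator (integrable_const (ψ i)) (hω'm i)
    have eφ : ∫ x, φ (f x) ∂(volume.restrict Ω) = ∫ y, φ y ∂(volume.restrict Ω) := by
      conv_rhs => rw [← hfmap]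
      rw [integral_map hfaem hφmeas.aestronglyMeasurable]
    set κ : ℝ := (volume Ω / N).toReal with hκdef
    have hLκ : ∀ i : Fin N, (volume (L' i)).toReal = κ := fun i => by rw [hL'vol i]
    have hωκ : ∀ i : Fin N, (volume (ω' i)).toReal = κ := fun i => by rw [hω'vol i]
    have hsq_int : ∀ i : Fin N,
        IntegrableOn (fun y => ‖y - Mi i‖ ^ 2) (L' i) volume := by
      intro i
      have hcg : Continuous (fun y : EuclideanSpace ℝ (Fin d) => ‖y - Mi i‖ ^ 2) := by fun_prop
      have hconst : IntegrableOn (fun _ => (R + ‖Mi i‖) ^ 2) (L' i) volume :=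
        integrableOn_const (lt_of_le_of_lt (measure_mono (hL'sub i)) hΩfin.lt_top).ne
      apply Integrable.mono' hconst hcg.aestronglyMeasurable
      filter_upwards [ae_restrict_mem (hL'm i)] with y hy
      have hy2 : ‖y - Mi i‖ ≤ R + ‖Mi i‖ := le_trans (norm_sub_le y (Mi i))
        (by have := hnorm_le y (hL'sub i hy); linarith)
      rw [Real.norm_of_nonneg (by positivity)]
      exact pow_le_pow_left₀ (norm_nonneg _) hy2 2
    have eφ2 : ∫ y, φ y ∂(volume.restrict Ω)
        = ∑ i : Fin N, ((∫ y in L i, ‖y - Mi i‖ ^ 2 ∂volume) + κ * ψ i) := by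
      simp only [hφdef]
      rw [integral_finset_sum _ fun i _ => hind_int i]
      apply Finset.sum_congr rfl
      intro i _
      rw [integral_indicator (hL'm i), hrestrL' i]
      have : ∫ y in L' i, (‖y - Mi i‖ ^ 2 + ψ i) ∂volume
          = (∫ y in L' i, ‖y - Mi i‖ ^ 2 ∂volume) + (∫ _ in L' i, ψ i ∂volume) := by
        apply integral_add (hsq_int i)
        exact integrableOn_const (lt_of_le_of_lt (measure_mono (hL'sub i)) hΩfin.lt_top).ne
      rw [this, setIntegral_const, measureReal_def, hLκ i, smul_eq_mul,
        setIntegral_congr_set (hL'ae i)]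
    have eg : ∫ x, g x ∂(volume.restrict Ω) = ∑ i : Fin N, κ * ψ i := by
      simp only [hgdef]
      rw [integral_finset_sum _ fun i _ => hind_intg i]
      apply Finset.sum_congr rfl
      intro i _
      rw [integral_indicator (hω'm i), hrestrω' i, setIntegral_const, measureReal_def, hωκ i, smul_eq_mul]
    have etot : ∫ x, (φ (f x) - g x) ∂(volume.restrict Ω)
        = ∑ i : Fin N, ∫ x in Lag Mi ψ i ∩ Ω, ‖x - Mi i‖ ^ 2 := by
      rw [integral_sub hφf_int hg_int, eφ, eφ2, eg, Finset.sum_add_distrib]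
      simp only [hLdef]
      ring
    rw [← etot]
    exact hle
  -- conclusion
  have hRHS_eq : dist m S₀ ^ 2 = _ := hup
  have hRHS_nonneg : 0 ≤ ∑ i : Fin N, ∫ x in Lag Mi ψ i ∩ Ω, ‖x - Mi i‖ ^ 2 := by
    rw [← hup]
    positivity
  have hubd : Metric.infDist m (MPmaps Ω)
      ≤ Real.sqrt (∑ i : Fin N, ∫ x in Lag Mi ψ i ∩ Ω, ‖x - Mi i‖ ^ 2) := by
    have hd0 : dist m S₀ = Real.sqrt (∑ i : Fin N, ∫ x in Lag Mi ψ i ∩ Ω, ‖x - Mi i‖ ^ 2) := by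
      rw [← hup, Real.sqrt_sq dist_nonneg]
    exact hd0 ▸ Metric.infDist_le_dist_of_mem hS₀mem
  have hlbd : Real.sqrt (∑ i : Fin N, ∫ x in Lag Mi ψ i ∩ Ω, ‖x - Mi i‖ ^ 2)
      ≤ Metric.infDist m (MPmaps Ω) := by
    rw [Metric.infDist_eq_iInf]
    haveI : Nonempty ↥(MPmaps Ω) := ⟨⟨S₀, hS₀mem⟩⟩
    apply le_ciInf
    intro y
    have hy := hlow y y.2
    have := Real.sqrt_le_sqrt hy
    rwa [Real.sqrt_sq dist_nonneg] at this
  have : Metric.infDist m (MPmaps Ω)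
      = Real.sqrt (∑ i : Fin N, ∫ x in Lag Mi ψ i ∩ Ω, ‖x - Mi i‖ ^ 2) :=
    le_antisymm hubd hlbd
  rw [this, Real.sq_sqrt hRHS_nonneg]
end
end
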